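/- arXiv:1710.07546 — 3 statements merged into one kernel-verified Lean document; each statement's English description precedes it below -/
import Mathlib

section
/- Let G be a minimal non-sum-perfect graph (G is not sum-perfect but every proper induced subgraph of G is sum-perfect). Then for every vertex v of G, α(G − v) = α(G) and ω(G − v) = ω(G). -/
open SimpleGraph Finset

/-- The clique number of a finite graph: the largest `n` such that `G` has an `n`-clique. -/
noncomputable def omegaNum {V : Type*} [Fintype V] (G : SimpleGraph V) : ℕ :=
  sSup {n | ∃ s : Finset V, G.IsNClique n s}

/-- The stability (independence) number: the clique number of the complement. -/
noncomputable def alphaNum {V : Type*} [Fintype V] (G : SimpleGraph V) : ℕ :=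
  omegaNum Gᶜ

/-- A graph is sum-perfect if every induced subgraph `H` satisfies `α(H) + ω(H) ≥ |V(H)|`. -/
def SumPerfect {V : Type*} [Fintype V] (G : SimpleGraph V) : Prop :=
  ∀ s : Finset V, s.card ≤ alphaNum (G.induce (s : Set V)) + omegaNum (G.induce (s : Set V))

/-- `G` is minimally non-sum-perfect: not sum-perfect, but every proper induced subgraph is. -/
def MinimalNonSumPerfect {V : Type*} [Fintype V] (G : SimpleGraph V) : Prop :=
  ¬ SumPerfect G ∧ ∀ s : Finset V, s ≠ Finset.univ → SumPerfect (G.induce (s : Set V))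

/-- `G` is threshold: there is an ordering of all vertices in which every vertex is adjacent
to all of the earlier vertices or to none of them. -/
def IsThreshold {V : Type*} [Fintype V] (G : SimpleGraph V) : Prop :=
  ∃ L : List V, L.Nodup ∧ (∀ v : V, v ∈ L) ∧
    ∀ (i j k : ℕ) (hi : i < L.length) (hj : j < L.length) (hk : k < L.length),
      j < i → k < i →
        (G.Adj (L.get ⟨i, hi⟩) (L.get ⟨j, hj⟩) ↔ G.Adj (L.get ⟨i, hi⟩) (L.get ⟨k, hk⟩))

lemma myBdd {V : Type*} [Fintype V] (G : SimpleGraph V) :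
    BddAbove {n | ∃ s : Finset V, G.IsNClique n s} := by
  use Fintype.card V
  rintro y ⟨s, hs⟩
  rw [SimpleGraph.isNClique_iff] at hs
  rw [← hs.2]
  exact Finset.card_le_card (Finset.subset_univ s)

lemma omegaNum_le_of_emb {V W : Type*} [Fintype V] [Fintype W] {G : SimpleGraph V}
    {H : SimpleGraph W} (f : G ↪g H) : omegaNum G ≤ omegaNum H := by
  refine csSup_le ⟨0, ∅, by simp⟩ ?_
  rintro n ⟨s, hs⟩
  apply le_csSup (myBdd H)
  refine ⟨s.map f.toEmbedding, (hs.map).mono ?_⟩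
  intro a b hab
  simp only [SimpleGraph.map_adj] at hab
  obtain ⟨x, y, hxy, rfl, rfl⟩ := hab
  exact f.map_rel_iff.mpr hxy

lemma omegaNum_iso {V W : Type*} [Fintype V] [Fintype W] {G : SimpleGraph V}
    {H : SimpleGraph W} (e : G ≃g H) : omegaNum G = omegaNum H :=
  le_antisymm (omegaNum_le_of_emb e.toEmbedding) (omegaNum_le_of_emb e.symm.toEmbedding)

def induceSetCongr {V : Type*} (G : SimpleGraph V) {s t : Set V} (h : s = t) :
    G.induce s ≃g G.induce t :=
  { Equiv.setCongr h with map_rel_iff' := Iff.rfl }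

lemma compl_induce {V : Type*} (G : SimpleGraph V) (s : Set V) :
    (G.induce s)ᶜ = Gᶜ.induce s := by
  ext a b
  simp only [SimpleGraph.compl_adj, SimpleGraph.comap_adj, Function.Embedding.coe_subtype,
    ne_eq, Subtype.coe_injective.eq_iff]

lemma alphaNum_induce_eq {V : Type*} [Fintype V] (G : SimpleGraph V) (s : Set V) [Fintype s] :
    alphaNum (G.induce s) = omegaNum (Gᶜ.induce s) := by
  unfold alphaNum
  rw [compl_induce]

lemma omegaNum_induce_congr {V : Type*} [Fintype V] (G : SimpleGraph V) {s t : Set V}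
    [Fintype s] [Fintype t] (h : s = t) :
    omegaNum (G.induce s) = omegaNum (G.induce t) :=
  omegaNum_iso (induceSetCongr G h)

lemma alphaNum_induce_congr {V : Type*} [Fintype V] (G : SimpleGraph V) {s t : Set V}
    [Fintype s] [Fintype t] (h : s = t) :
    alphaNum (G.induce s) = alphaNum (G.induce t) := by
  rw [alphaNum_induce_eq, alphaNum_induce_eq]
  exact omegaNum_induce_congr Gᶜ h

lemma sumPerfect_card_le {W : Type*} [Fintype W] (H : SimpleGraph W) (h : SumPerfect H) :
    Fintype.card W ≤ alphaNum H + omegaNum H := by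
  have hu := h Finset.univ
  have e0 : omegaNum (H.induce ((Finset.univ : Finset W) : Set W)) = omegaNum H :=
    (omegaNum_induce_congr H (Finset.coe_univ)).trans (omegaNum_iso (induceUnivIso H))
  have e1 : alphaNum (H.induce ((Finset.univ : Finset W) : Set W)) = alphaNum H := by
    rw [alphaNum_induce_congr H (Finset.coe_univ), alphaNum_induce_eq]
    exact omegaNum_iso (induceUnivIso Hᶜ)
  rw [Finset.card_univ] at hu
  omega

lemma card_lt_of_not_sumPerfect {V : Type*} [Fintype V] (G : SimpleGraph V)
    (hG : MinimalNonSumPerfect G) :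
    alphaNum G + omegaNum G < Fintype.card V := by
  obtain ⟨hns, hmin⟩ := hG
  rw [SumPerfect] at hns
  push_neg at hns
  obtain ⟨s, hs⟩ := hns
  by_cases h : s = Finset.univ
  · subst h
    rw [Finset.card_univ] at hs
    have e0 : omegaNum (G.induce ((Finset.univ : Finset V) : Set V)) = omegaNum G :=
      (omegaNum_induce_congr G (Finset.coe_univ)).trans (omegaNum_iso (induceUnivIso G))
    have e1 : alphaNum (G.induce ((Finset.univ : Finset V) : Set V)) = alphaNum G := by
      rw [alphaNum_induce_congr G (Finset.coe_univ), alphaNum_induce_eq]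
      exact omegaNum_iso (induceUnivIso Gᶜ)
    omega
  · exfalso
    have := sumPerfect_card_le _ (hmin s h)
    have hc : Fintype.card (s : Set V) = s.card := Fintype.card_coe s
    omega

/-- In a minimal non-sum-perfect graph, deleting any vertex preserves both `α` and `ω`. -/
theorem stmt10 {V : Type*} [Fintype V] [DecidableEq V] (G : SimpleGraph V)
    (hG : MinimalNonSumPerfect G) :
    ∀ v : V, alphaNum (G.induce ({v}ᶜ : Set V)) = alphaNum G ∧
      omegaNum (G.induce ({v}ᶜ : Set V)) = omegaNum G := by
  intro v
  have hcard := card_lt_of_not_sumPerfect G hG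
  have hne : (Finset.univ.erase v) ≠ Finset.univ := by
    intro h
    have : v ∈ Finset.univ.erase v := by rw [h]; exact Finset.mem_univ v
    simp at this
  have hsp := hG.2 _ hne
  have hset : ((Finset.univ.erase v : Finset V) : Set V) = ({v}ᶜ : Set V) := by
    ext x; simp [eq_comm]
  have hle := sumPerfect_card_le _ hsp
  rw [alphaNum_induce_congr G hset, omegaNum_induce_congr G hset,
    Fintype.card_congr (Equiv.setCongr hset)] at hle
  have hcc : Fintype.card ({v}ᶜ : Set V) = Fintype.card V - 1 := by
    rw [Fintype.card_compl_set]
    simp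
  have hα : alphaNum (G.induce ({v}ᶜ : Set V)) ≤ alphaNum G := by
    rw [alphaNum_induce_eq]
    exact omegaNum_le_of_emb (SimpleGraph.Embedding.induce _)
  have hω : omegaNum (G.induce ({v}ᶜ : Set V)) ≤ omegaNum G :=
    omegaNum_le_of_emb (SimpleGraph.Embedding.induce _)
  have hpos : 1 ≤ Fintype.card V := Fintype.card_pos_iff.mpr ⟨v⟩
  omega
end

section
/- Let G be a minimal non-sum-perfect graph with at least 7 vertices. Then G is connected. -/
open SimpleGraph Finset

set_option linter.unusedSectionVars false

open scoped Classical

section API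
variable {V : Type*} [Fintype V]

/-- max size of a clique of `G` inside `s` -/
noncomputable def omF (G : SimpleGraph V) (s : Finset V) : ℕ :=
  (s.powerset.filter (fun t : Finset V => G.IsClique (↑t : Set V))).sup Finset.card

omit [Fintype V] in
lemma mem_cliques {G : SimpleGraph V} {s t : Finset V} :
    t ∈ s.powerset.filter (fun t : Finset V => G.IsClique (↑t : Set V)) ↔
      t ⊆ s ∧ G.IsClique (↑t : Set V) := by
  simp [Finset.mem_filter, Finset.mem_powerset]

lemma le_omF {G : SimpleGraph V} {s t : Finset V} (hts : t ⊆ s)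
    (hc : G.IsClique (↑t : Set V)) : t.card ≤ omF G s :=
  Finset.le_sup (mem_cliques.mpr ⟨hts, hc⟩)

lemma exists_omF (G : SimpleGraph V) (s : Finset V) :
    ∃ t, t ⊆ s ∧ G.IsClique (↑t : Set V) ∧ t.card = omF G s := by
  obtain ⟨t, ht, h⟩ := Finset.exists_mem_eq_sup
    (s.powerset.filter (fun t : Finset V => G.IsClique (↑t : Set V)))
    ⟨∅, mem_cliques.mpr ⟨Finset.empty_subset _, by simp⟩⟩
    Finset.card
  rw [mem_cliques] at ht
  exact ⟨t, ht.1, ht.2, h.symm⟩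

lemma omF_mono {G : SimpleGraph V} {s s' : Finset V} (h : s ⊆ s') : omF G s ≤ omF G s' := by
  obtain ⟨t, hts, hc, hcard⟩ := exists_omF G s
  rw [← hcard]; exact le_omF (hts.trans h) hc

lemma omF_le_card {G : SimpleGraph V} {s : Finset V} : omF G s ≤ s.card := by
  obtain ⟨t, hts, _, hcard⟩ := exists_omF G s
  rw [← hcard]; exact Finset.card_le_card hts

lemma omF_pos {G : SimpleGraph V} {s : Finset V} (h : s.Nonempty) : 1 ≤ omF G s := by
  obtain ⟨x, hx⟩ := h
  have h1 : ({x} : Finset V) ⊆ s := by simpa using hx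
  have h2 : G.IsClique (↑({x} : Finset V) : Set V) := by
    simp
  have := le_omF h1 h2
  simpa using this

lemma omegaNum_eq_omF (G : SimpleGraph V) : omegaNum G = omF G Finset.univ := by
  have hne : {n | ∃ s : Finset V, G.IsNClique n s}.Nonempty := ⟨0, ⟨∅, by simp⟩⟩
  apply le_antisymm
  · apply csSup_le hne
    rintro n ⟨u, hu⟩
    exact hu.card_eq ▸ le_omF (Finset.subset_univ u) hu.isClique
  · obtain ⟨t, _, htc, hcard⟩ := exists_omF G Finset.univ
    rw [← hcard]
    refine le_csSup ⟨Fintype.card V, ?_⟩ ⟨t, SimpleGraph.IsNClique.mk htc rfl⟩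
    rintro n ⟨u, hu⟩
    exact hu.card_eq ▸ (Finset.card_le_card (Finset.subset_univ u)).trans_eq Finset.card_univ

lemma omF_induce (G : SimpleGraph V) (s : Finset V) :
    omF (G.induce (s : Set V)) Finset.univ = omF G s := by
  apply le_antisymm
  · obtain ⟨t, -, htc, hcard⟩ := exists_omF (G.induce (s : Set V)) Finset.univ
    rw [← hcard]
    have hcm : (t.map (Function.Embedding.subtype _)).card = t.card := Finset.card_map _
    rw [← hcm]
    refine le_omF ?_ ?_
    · intro x hx
      obtain ⟨y, _, rfl⟩ := Finset.mem_map.mp hx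
      rcases y with ⟨v, hv⟩
      simpa using hv
    · intro x hx y hy hxy
      obtain ⟨a, ha, rfl⟩ := Finset.mem_map.mp (Finset.mem_coe.mp hx)
      obtain ⟨b, hb, rfl⟩ := Finset.mem_map.mp (Finset.mem_coe.mp hy)
      have hab : a ≠ b := by rintro rfl; exact hxy rfl
      exact comap_adj.mp (htc (Finset.mem_coe.mpr ha) (Finset.mem_coe.mpr hb) hab)
  · obtain ⟨t, hts, htc, hcard⟩ := exists_omF G s
    rw [← hcard]
    have hmem : ∀ x : {x // x ∈ t}, (x : V) ∈ (↑s : Set V) := by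
      intro x; exact Finset.mem_coe.mpr (hts x.2)
    set f : {x // x ∈ t} → ↥(↑s : Set V) := fun x => ⟨x.1, hmem x⟩ with hf
    have hfinj : Function.Injective f := by
      intro a b hab
      apply Subtype.ext
      have : (f a).1 = (f b).1 := congrArg Subtype.val hab
      simpa [hf] using this
    have hcm : (t.attach.map ⟨f, hfinj⟩).card = t.card := by
      rw [Finset.card_map, Finset.card_attach]
    rw [← hcm]
    refine le_omF (Finset.subset_univ _) ?_
    intro x hx y hy hxy
    obtain ⟨a, _, rfl⟩ := Finset.mem_map.mp (Finset.mem_coe.mp hx)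
    obtain ⟨b, _, rfl⟩ := Finset.mem_map.mp (Finset.mem_coe.mp hy)
    have hvne : (a : V) ≠ (b : V) := by
      intro h
      exact hxy (congrArg _ (Subtype.ext h))
    exact comap_adj.mpr (htc (Finset.mem_coe.mpr a.2) (Finset.mem_coe.mpr b.2) hvne)

omit [Fintype V] in
lemma induce_compl (G : SimpleGraph V) (s : Set V) :
    (G.induce s)ᶜ = Gᶜ.induce s := by
  ext a b
  simp only [compl_adj, comap_adj, Function.Embedding.coe_subtype]
  constructor
  · rintro ⟨hab, h⟩
    exact ⟨Subtype.coe_injective.ne hab, h⟩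
  · rintro ⟨hab, h⟩
    exact ⟨fun h' => hab (congrArg _ h'), h⟩

lemma omegaNum_induce (G : SimpleGraph V) (s : Finset V) :
    omegaNum (G.induce (s : Set V)) = omF G s := by
  rw [omegaNum_eq_omF, omF_induce]

lemma alphaNum_induce (G : SimpleGraph V) (s : Finset V) :
    alphaNum (G.induce (s : Set V)) = omF Gᶜ s := by
  rw [alphaNum, induce_compl, omegaNum_eq_omF, omF_induce]

end API

section API2
variable {V : Type*} [Fintype V] {G : SimpleGraph V}

lemma pair_clique {x y : V} (h : G.Adj x y) : G.IsClique (↑({x, y} : Finset V) : Set V) := by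
  rw [Finset.coe_insert, Finset.coe_singleton]
  exact isClique_pair.mpr (fun _ => h)

lemma pair_indep {x y : V} (hne : x ≠ y) (h : ¬ G.Adj x y) :
    Gᶜ.IsClique (↑({x, y} : Finset V) : Set V) := by
  rw [Finset.coe_insert, Finset.coe_singleton]
  exact isClique_pair.mpr (fun _ => ⟨hne, h⟩)

/-- a two-element clique inside s gives omF ≥ 2 -/
lemma two_le_omF {s : Finset V} {x y : V} (hx : x ∈ s) (hy : y ∈ s) (h : G.Adj x y) :
    2 ≤ omF G s := by
  have hsub : ({x, y} : Finset V) ⊆ s := by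
    intro z hz; rcases Finset.mem_insert.mp hz with rfl | hz
    · exact hx
    · exact (Finset.mem_singleton.mp hz) ▸ hy
  have := le_omF hsub (pair_clique h)
  rwa [Finset.card_pair h.ne] at this

lemma indep_of_omF_le_one {s : Finset V} (h : omF G s ≤ 1) : Gᶜ.IsClique (↑s : Set V) := by
  intro x hx y hy hxy
  refine ⟨hxy, fun hadj => ?_⟩
  have := two_le_omF (Finset.mem_coe.mp hx) (Finset.mem_coe.mp hy) hadj
  omega

lemma clique_inter_indep_card {t u : Finset V} (ht : G.IsClique (↑t : Set V))
    (hu : Gᶜ.IsClique (↑u : Set V)) : (t ∩ u).card ≤ 1 := by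
  by_contra h
  push_neg at h
  obtain ⟨x, hx, y, hy, hxy⟩ := Finset.one_lt_card.mp h
  have h1 := ht (Finset.mem_coe.mpr (Finset.mem_of_mem_inter_left hx))
    (Finset.mem_coe.mpr (Finset.mem_of_mem_inter_left hy)) hxy
  have h2 := hu (Finset.mem_coe.mpr (Finset.mem_of_mem_inter_right hx))
    (Finset.mem_coe.mpr (Finset.mem_of_mem_inter_right hy)) hxy
  exact h2.2 h1

/-- clique finset: omF = card -/
lemma omF_clique {s : Finset V} (h : G.IsClique (↑s : Set V)) : omF G s = s.card :=
  le_antisymm omF_le_card (le_omF Finset.Subset.rfl h)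

/-- nonempty clique finset: independence number 1 -/
lemma aF_clique {s : Finset V} (h : G.IsClique (↑s : Set V)) (hne : s.Nonempty) :
    omF Gᶜ s = 1 := by
  refine le_antisymm ?_ (omF_pos hne)
  obtain ⟨t, hts, htc, hcard⟩ := exists_omF Gᶜ s
  rw [← hcard]
  have : t ∩ s = t := Finset.inter_eq_left.mpr hts
  have h2 := clique_inter_indep_card h htc
  rwa [Finset.inter_comm, this] at h2

variable {A B : Finset V}

lemma omF_union_max (hd : Disjoint A B) (hAB : ∀ x ∈ A, ∀ y ∈ B, ¬ G.Adj x y) :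
    omF G (A ∪ B) = max (omF G A) (omF G B) := by
  apply le_antisymm
  · obtain ⟨t, hts, htc, hcard⟩ := exists_omF G (A ∪ B)
    rw [← hcard]
    have : t ⊆ A ∨ t ⊆ B := by
      by_contra hcon
      push_neg at hcon
      obtain ⟨x, hxt, hxA⟩ := Finset.not_subset.mp hcon.1
      obtain ⟨y, hyt, hyB⟩ := Finset.not_subset.mp hcon.2
      have hxB : x ∈ B := by
        rcases Finset.mem_union.mp (hts hxt) with h | h
        · exact absurd h hxA
        · exact h
      have hyA : y ∈ A := by
        rcases Finset.mem_union.mp (hts hyt) with h | h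
        · exact h
        · exact absurd h hyB
      have hne : y ≠ x := fun h => (Finset.disjoint_left.mp hd hyA) (h ▸ hxB)
      exact hAB y hyA x hxB (htc (Finset.mem_coe.mpr hyt) (Finset.mem_coe.mpr hxt) hne)
    rcases this with h | h
    · exact le_max_of_le_left (le_omF h htc)
    · exact le_max_of_le_right (le_omF h htc)
  · exact max_le (omF_mono Finset.subset_union_left) (omF_mono Finset.subset_union_right)

end API2

section API3
variable {V : Type*} [Fintype V] {G : SimpleGraph V} {A B : Finset V}

lemma aF_union_add (hd : Disjoint A B) (hAB : ∀ x ∈ A, ∀ y ∈ B, ¬ G.Adj x y) :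
    omF Gᶜ (A ∪ B) = omF Gᶜ A + omF Gᶜ B := by
  apply le_antisymm
  · obtain ⟨t, hts, htc, hcard⟩ := exists_omF Gᶜ (A ∪ B)
    rw [← hcard]
    have hsplit : t = (t ∩ A) ∪ (t ∩ B) := by
      rw [← Finset.inter_union_distrib_left]
      exact (Finset.inter_eq_left.mpr hts).symm
    have hdisj : Disjoint (t ∩ A) (t ∩ B) :=
      hd.mono Finset.inter_subset_right Finset.inter_subset_right
    calc t.card = (t ∩ A).card + (t ∩ B).card := by
          rw [hsplit, Finset.card_union_of_disjoint hdisj]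
          congr 1 <;> rw [← hsplit]
      _ ≤ omF Gᶜ A + omF Gᶜ B := by
          gcongr
          · exact le_omF Finset.inter_subset_right
              (htc.subset (by intro z hz; exact Finset.mem_coe.mpr (Finset.inter_subset_left (Finset.mem_coe.mp hz))))
          · exact le_omF Finset.inter_subset_right
              (htc.subset (by intro z hz; exact Finset.mem_coe.mpr (Finset.inter_subset_left (Finset.mem_coe.mp hz))))
  · obtain ⟨tA, hA1, hA2, hA3⟩ := exists_omF Gᶜ A
    obtain ⟨tB, hB1, hB2, hB3⟩ := exists_omF Gᶜ B
    have hdisj : Disjoint tA tB := hd.mono hA1 hB1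
    have hclique : Gᶜ.IsClique (↑(tA ∪ tB) : Set V) := by
      intro x hx y hy hxy
      rw [Finset.coe_union, Set.mem_union] at hx hy
      rcases hx with hx | hx <;> rcases hy with hy | hy
      · exact hA2 hx hy hxy
      · exact ⟨hxy, hAB x (hA1 (Finset.mem_coe.mp hx)) y (hB1 (Finset.mem_coe.mp hy))⟩
      · exact ⟨hxy, fun hadj => hAB y (hA1 (Finset.mem_coe.mp hy)) x (hB1 (Finset.mem_coe.mp hx)) hadj.symm⟩
      · exact hB2 hx hy hxy
    have := le_omF (Finset.union_subset_union hA1 hB1) hclique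
    rwa [Finset.card_union_of_disjoint hdisj, hA3, hB3] at this

end API3

section Minimality
variable {V : Type*} [Fintype V] {G : SimpleGraph V}

lemma sumPerfect_card_le_s15 (h : SumPerfect G) (s : Finset V) :
    s.card ≤ omF Gᶜ s + omF G s := by
  have := h s
  rwa [alphaNum_induce, omegaNum_induce] at this

lemma F0 (hG : MinimalNonSumPerfect G) {S : Finset V} (h : S ≠ Finset.univ) :
    S.card ≤ omF Gᶜ S + omF G S := by
  have hsp := hG.2 S h
  have key := hsp (Finset.univ : Finset ↥((S : Set V)))
  rw [alphaNum_induce, omegaNum_induce] at key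
  have h1 : omF (G.induce (S : Set V))ᶜ Finset.univ = omF Gᶜ S := by
    rw [induce_compl, omF_induce]
  have h2 : omF (G.induce (S : Set V)) Finset.univ = omF G S := omF_induce G S
  have h3 : (Finset.univ : Finset ↥((S : Set V))).card = S.card := by
    rw [Finset.card_univ]
    simp
  rw [h1, h2, h3] at key
  exact key

lemma F1 (hG : MinimalNonSumPerfect G) :
    omF Gᶜ Finset.univ + omF G Finset.univ + 1 ≤ Fintype.card V := by
  have h1 := hG.1
  rw [SumPerfect] at h1
  push_neg at h1
  obtain ⟨s, hs⟩ := h1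
  rw [alphaNum_induce, omegaNum_induce] at hs
  by_cases hu : s = Finset.univ
  · subst hu
    rw [Finset.card_univ] at hs
    omega
  · exact absurd (F0 hG hu) (by omega)

end Minimality

section Split
variable {V : Type*} [Fintype V] {G : SimpleGraph V}

lemma cross_mono {A B A' B' : Finset V} (hA : A' ⊆ A) (hB : B' ⊆ B)
    (h : ∀ x ∈ A, ∀ y ∈ B, ¬ G.Adj x y) : ∀ x ∈ A', ∀ y ∈ B', ¬ G.Adj x y :=
  fun x hx y hy => h x (hA hx) y (hB hy)

lemma cross_symm {A B : Finset V} (h : ∀ x ∈ A, ∀ y ∈ B, ¬ G.Adj x y) :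
    ∀ x ∈ B, ∀ y ∈ A, ¬ G.Adj x y :=
  fun x hx y hy hadj => h y hy x hx hadj.symm

lemma F0split (hG : MinimalNonSumPerfect G) {A B : Finset V} (hd : Disjoint A B)
    (hAB : ∀ x ∈ A, ∀ y ∈ B, ¬ G.Adj x y) (hlt : A.card + B.card < Fintype.card V) :
    A.card + B.card ≤ (omF Gᶜ A + omF Gᶜ B) + max (omF G A) (omF G B) := by
  have hne : A ∪ B ≠ Finset.univ := by
    intro h
    have := congrArg Finset.card h
    rw [Finset.card_union_of_disjoint hd, Finset.card_univ] at this
    omega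
  have := F0 hG hne
  rwa [aF_union_add hd hAB, omF_union_max hd hAB, Finset.card_union_of_disjoint hd] at this

lemma side_ne_univ {A B : Finset V} (hd : Disjoint A B) (hB : B.Nonempty) :
    A ≠ Finset.univ := by
  obtain ⟨b, hb⟩ := hB
  intro h
  exact Finset.disjoint_right.mp hd hb (h ▸ Finset.mem_univ b)

variable {A B : Finset V}

/-- main equality: α(A)+α(B)+max(ω A, ω B) + 1 = |A| + |B| -/
lemma splitEQ (hG : MinimalNonSumPerfect G) (hU : A ∪ B = Finset.univ)
    (hd : Disjoint A B) (hAB : ∀ x ∈ A, ∀ y ∈ B, ¬ G.Adj x y) (hA : A.Nonempty) :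
    omF Gᶜ A + omF Gᶜ B + max (omF G A) (omF G B) + 1 = A.card + B.card := by
  have hn : A.card + B.card = Fintype.card V := by
    rw [← Finset.card_univ, ← hU, Finset.card_union_of_disjoint hd]
  have hub : omF Gᶜ A + omF Gᶜ B + max (omF G A) (omF G B) + 1 ≤ A.card + B.card := by
    have := F1 hG
    rw [← hU, aF_union_add hd hAB, omF_union_max hd hAB] at this
    omega
  obtain ⟨v, hv⟩ := hA
  have hd' : Disjoint (A.erase v) B := hd.mono_left (Finset.erase_subset v A)
  have hAB' := cross_mono (Finset.erase_subset v A) Finset.Subset.rfl hAB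
  have hlt : (A.erase v).card + B.card < Fintype.card V := by
    rw [Finset.card_erase_of_mem hv]
    have : 1 ≤ A.card := Finset.card_pos.mpr ⟨v, hv⟩
    omega
  have hlb := F0split hG hd' hAB' hlt
  have h1 : omF Gᶜ (A.erase v) ≤ omF Gᶜ A := omF_mono (Finset.erase_subset v A)
  have h2 : omF G (A.erase v) ≤ omF G A := omF_mono (Finset.erase_subset v A)
  have h3 : max (omF G (A.erase v)) (omF G B) ≤ max (omF G A) (omF G B) :=
    max_le_max h2 le_rfl
  rw [Finset.card_erase_of_mem hv] at hlb
  have : 1 ≤ A.card := Finset.card_pos.mpr ⟨v, hv⟩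
  omega

/-- both sides contain an edge -/
lemma two_le_oB (hG : MinimalNonSumPerfect G) (hU : A ∪ B = Finset.univ)
    (hd : Disjoint A B) (hAB : ∀ x ∈ A, ∀ y ∈ B, ¬ G.Adj x y)
    (hA : A.Nonempty) (hB : B.Nonempty) : 2 ≤ omF G B := by
  by_contra hcon
  push_neg at hcon
  have hBind : Gᶜ.IsClique (↑B : Set V) := indep_of_omF_le_one (by omega)
  have hBcard : omF Gᶜ B = B.card := omF_clique (G := Gᶜ) hBind
  have hEQ := splitEQ hG hU hd hAB hA
  have hF0A : A.card ≤ omF Gᶜ A + omF G A := F0 hG (side_ne_univ hd hB)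
  have h1 : 1 ≤ omF G A := omF_pos hA
  have h2 : 1 ≤ omF G B := omF_pos hB
  have hmax : max (omF G A) (omF G B) = omF G A ∨ max (omF G A) (omF G B) = omF G B :=
    max_choice _ _
  have hmax1 : omF G A ≤ max (omF G A) (omF G B) := le_max_left _ _
  have hmax2 : omF G B ≤ max (omF G A) (omF G B) := le_max_right _ _
  omega

/-- clique-or-tight -/
lemma clique_or_tight (hG : MinimalNonSumPerfect G) (hU : A ∪ B = Finset.univ)
    (hd : Disjoint A B) (hAB : ∀ x ∈ A, ∀ y ∈ B, ¬ G.Adj x y)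
    (hA : A.Nonempty) (hB : B.Nonempty) :
    G.IsClique (↑B : Set V) ∨ B.card = omF Gᶜ B + omF G B := by
  obtain ⟨K, hK1, hK2, hK3⟩ := exists_omF G B
  by_cases hcount : omF G B = B.card
  · left
    have : K = B := Finset.eq_of_subset_of_card_le hK1 (by omega)
    exact this ▸ hK2
  · right
    have holt : omF G B < B.card := lt_of_le_of_ne omF_le_card hcount
    have hKne : K.Nonempty := Finset.card_pos.mp (by rw [hK3]; exact omF_pos hB)
    have hd' : Disjoint A K := hd.mono_right hK1
    have hAB' := cross_mono Finset.Subset.rfl hK1 hAB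
    have hn : A.card + B.card = Fintype.card V := by
      rw [← Finset.card_univ, ← hU, Finset.card_union_of_disjoint hd]
    have hlt : A.card + K.card < Fintype.card V := by omega
    have hF0 := F0split hG hd' hAB' hlt
    have haK : omF Gᶜ K = 1 := aF_clique hK2 hKne
    have hoK : omF G K = K.card := omF_clique hK2
    have hEQ := splitEQ hG hU hd hAB hA
    have hF0B : B.card ≤ omF Gᶜ B + omF G B := F0 hG (side_ne_univ hd.symm hA)
    -- max bookkeeping
    have hm1 : max (omF G A) (omF G B) = omF G A ∨ max (omF G A) (omF G B) = omF G B :=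
      max_choice _ _
    have hm1a : omF G A ≤ max (omF G A) (omF G B) := le_max_left _ _
    have hm1b : omF G B ≤ max (omF G A) (omF G B) := le_max_right _ _
    have hm2 : max (omF G A) (omF G K) = omF G A ∨ max (omF G A) (omF G K) = omF G K :=
      max_choice _ _
    have hm2a : omF G A ≤ max (omF G A) (omF G K) := le_max_left _ _
    have hm2b : omF G K ≤ max (omF G A) (omF G K) := le_max_right _ _
    omega

/-- deleting a vertex of a clique side -/
lemma clique_del (hG : MinimalNonSumPerfect G) (hU : A ∪ B = Finset.univ)
    (hd : Disjoint A B) (hAB : ∀ x ∈ A, ∀ y ∈ B, ¬ G.Adj x y)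
    (hAclq : G.IsClique (↑A : Set V)) (hA2 : 2 ≤ A.card) :
    A.card - 1 + B.card ≤ 1 + omF Gᶜ B + max (A.card - 1) (omF G B) := by
  obtain ⟨v, hv⟩ := Finset.card_pos.mp (by omega : 0 < A.card)
  have hsub := Finset.erase_subset v A
  have hd' : Disjoint (A.erase v) B := hd.mono_left hsub
  have hAB' := cross_mono hsub Finset.Subset.rfl hAB
  have hclq' : G.IsClique (↑(A.erase v) : Set V) := hAclq.subset (by
    intro z hz; exact Finset.mem_coe.mpr (hsub (Finset.mem_coe.mp hz)))
  have hne' : (A.erase v).Nonempty := by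
    rw [← Finset.card_pos, Finset.card_erase_of_mem hv]; omega
  have ha' : omF Gᶜ (A.erase v) = 1 := aF_clique hclq' hne'
  have ho' : omF G (A.erase v) = (A.erase v).card := omF_clique hclq'
  have hn : A.card + B.card = Fintype.card V := by
    rw [← Finset.card_univ, ← hU, Finset.card_union_of_disjoint hd]
  have hlt : (A.erase v).card + B.card < Fintype.card V := by
    rw [Finset.card_erase_of_mem hv]; omega
  have := F0split hG hd' hAB' hlt
  rw [ha', ho', Finset.card_erase_of_mem hv] at this
  exact this

end Split

section Cases
variable {V : Type*} [Fintype V] {G : SimpleGraph V} {A B : Finset V}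

lemma case_cliques (hG : MinimalNonSumPerfect G) (hU : A ∪ B = Finset.univ)
    (hd : Disjoint A B) (hAB : ∀ x ∈ A, ∀ y ∈ B, ¬ G.Adj x y)
    (hA : A.Nonempty) (hB : B.Nonempty)
    (hAclq : G.IsClique (↑A : Set V)) (hBclq : G.IsClique (↑B : Set V))
    (h7 : 7 ≤ Fintype.card V) : False := by
  have hn : A.card + B.card = Fintype.card V := by
    rw [← Finset.card_univ, ← hU, Finset.card_union_of_disjoint hd]
  have haA : omF Gᶜ A = 1 := aF_clique hAclq hA
  have haB : omF Gᶜ B = 1 := aF_clique hBclq hB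
  have hoA : omF G A = A.card := omF_clique hAclq
  have hoB : omF G B = B.card := omF_clique hBclq
  have hEQ := splitEQ hG hU hd hAB hA
  have h2A : 2 ≤ A.card := hoA ▸ two_le_oB hG (by rw [Finset.union_comm]; exact hU) hd.symm
    (cross_symm hAB) hB hA
  have h2B : 2 ≤ B.card := hoB ▸ two_le_oB hG hU hd hAB hA hB
  have hdelA := clique_del hG hU hd hAB hAclq h2A
  have hdelB := clique_del hG (by rw [Finset.union_comm]; exact hU) hd.symm (cross_symm hAB)
    hBclq h2B
  rw [haB, hoB] at hdelA
  rw [haA, hoA] at hdelB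
  rw [haA, haB, hoA, hoB] at hEQ
  have hm1 := max_choice A.card B.card
  have hm1a := le_max_left A.card B.card
  have hm1b := le_max_right A.card B.card
  have hm2 := max_choice (A.card - 1) B.card
  have hm2a := le_max_left (A.card - 1) B.card
  have hm2b := le_max_right (A.card - 1) B.card
  have hm3 := max_choice (B.card - 1) A.card
  have hm3a := le_max_left (B.card - 1) A.card
  have hm3b := le_max_right (B.card - 1) A.card
  omega

end Cases

section CaseCT
variable {V : Type*} [Fintype V] {G : SimpleGraph V} {A B : Finset V}

lemma case_CT (hG : MinimalNonSumPerfect G) (hU : A ∪ B = Finset.univ)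
    (hd : Disjoint A B) (hAB : ∀ x ∈ A, ∀ y ∈ B, ¬ G.Adj x y)
    (hA : A.Nonempty) (hB : B.Nonempty)
    (hAclq : G.IsClique (↑A : Set V)) (htB : B.card = omF Gᶜ B + omF G B)
    (h7 : 7 ≤ Fintype.card V) : False := by
  set w := omF G B with hw
  set a := omF Gᶜ B with ha
  have hn : A.card + B.card = Fintype.card V := by
    rw [← Finset.card_univ, ← hU, Finset.card_union_of_disjoint hd]
  have haA : omF Gᶜ A = 1 := aF_clique hAclq hA
  have hoA : omF G A = A.card := omF_clique hAclq
  have hEQ := splitEQ hG hU hd hAB hA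
  have h2A : 2 ≤ A.card := hoA ▸ two_le_oB hG (by rw [Finset.union_comm]; exact hU) hd.symm
    (cross_symm hAB) hB hA
  have h2B : 2 ≤ w := two_le_oB hG hU hd hAB hA hB
  have hdelA := clique_del hG hU hd hAB hAclq h2A
  have hnA : A.card = 2 := by
    have hm1 := max_choice (omF G A) (omF G B)
    have hm1a := le_max_left (omF G A) (omF G B)
    have hm1b := le_max_right (omF G A) (omF G B)
    have hm2 := max_choice (A.card - 1) (omF G B)
    have hm2a := le_max_left (A.card - 1) (omF G B)
    have hm2b := le_max_right (A.card - 1) (omF G B)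
    omega
  have hmaxw : max (omF G A) (omF G B) = w := by
    have hm1 := max_choice (omF G A) (omF G B)
    have hm1a := le_max_left (omF G A) (omF G B)
    have hm1b := le_max_right (omF G A) (omF G B)
    omega
  have hnB : B.card = a + w := htB
  have hcardV : Fintype.card V = 2 + a + w := by omega
  have h5 : 5 ≤ a + w := by omega
  have h1a : 1 ≤ a := omF_pos (G := Gᶜ) hB
  -- independence/clique numbers don't drop when deleting a vertex of B
  have hiii : ∀ u ∈ B, ∃ t, t ⊆ B.erase u ∧ Gᶜ.IsClique (↑t : Set V) ∧ t.card = a := by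
    intro u hu
    have hsub := Finset.erase_subset u B
    have hd' : Disjoint A (B.erase u) := hd.mono_right hsub
    have hAB' := cross_mono Finset.Subset.rfl hsub hAB
    have hlt : A.card + (B.erase u).card < Fintype.card V := by
      rw [Finset.card_erase_of_mem hu]; omega
    have hF := F0split hG hd' hAB' hlt
    rw [Finset.card_erase_of_mem hu] at hF
    have hob : omF G (B.erase u) ≤ w := omF_mono hsub
    have hab : omF Gᶜ (B.erase u) ≤ a := omF_mono hsub
    have hmax : max (omF G A) (omF G (B.erase u)) ≤ w := max_le (by omega) hob
    have hgoal : omF Gᶜ (B.erase u) = a := by omega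
    obtain ⟨t, ht1, ht2, ht3⟩ := exists_omF Gᶜ (B.erase u)
    exact ⟨t, ht1, ht2, by omega⟩
  -- the max independent set and the rest
  obtain ⟨AI, hAI1, hAI2, hAI3⟩ := exists_omF Gᶜ B
  set K := B \ AI with hK
  have hKcard : K.card = w := by rw [hK, Finset.card_sdiff_of_subset hAI1]; omega
  have hKsub : K ⊆ B := Finset.sdiff_subset
  have hKAI : Disjoint K AI := Finset.sdiff_disjoint
  have hBcup : AI ∪ K = B := Finset.union_sdiff_of_subset hAI1
  have hcardsplit : ∀ t : Finset V, t ⊆ B → t.card = (t ∩ AI).card + (t ∩ K).card := by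
    intro t ht
    have h1 : t ∩ AI ∪ t ∩ K = t := by
      rw [← Finset.inter_union_distrib_left, hBcup, Finset.inter_eq_left.mpr ht]
    have hdisj : Disjoint (t ∩ AI) (t ∩ K) :=
      (hKAI.symm).mono Finset.inter_subset_right Finset.inter_subset_right
    rw [← Finset.card_union_of_disjoint hdisj, h1]
  by_cases h3w : 3 ≤ w
  · -- case ω(B) ≥ 3
    have hiv : ∀ v ∈ B, ∃ t, t ⊆ B.erase v ∧ G.IsClique (↑t : Set V) ∧ t.card = w := by
      intro v hv
      have hsub := Finset.erase_subset v B
      have hd' : Disjoint A (B.erase v) := hd.mono_right hsub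
      have hAB' := cross_mono Finset.Subset.rfl hsub hAB
      have hlt : A.card + (B.erase v).card < Fintype.card V := by
        rw [Finset.card_erase_of_mem hv]; omega
      have hF := F0split hG hd' hAB' hlt
      rw [Finset.card_erase_of_mem hv] at hF
      have hob : omF G (B.erase v) ≤ w := omF_mono hsub
      have hab : omF Gᶜ (B.erase v) ≤ a := omF_mono hsub
      have hm2 := max_choice (omF G A) (omF G (B.erase v))
      have hm2a := le_max_left (omF G A) (omF G (B.erase v))
      have hm2b := le_max_right (omF G A) (omF G (B.erase v))
      have hgoal : omF G (B.erase v) = w := by omega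
      obtain ⟨t, ht1, ht2, ht3⟩ := exists_omF G (B.erase v)
      exact ⟨t, ht1, ht2, by omega⟩
    -- K is a clique
    have hKclq : G.IsClique (↑K : Set V) := by
      intro x hx y hy hxy
      have hxK : x ∈ K := Finset.mem_coe.mp hx
      have hyK : y ∈ K := Finset.mem_coe.mp hy
      have hpair : ({x, y} : Finset V) ⊆ K := by
        intro z hz
        rcases Finset.mem_insert.mp hz with rfl | hz
        · exact hxK
        · exact (Finset.mem_singleton.mp hz) ▸ hyK
      have hCsub : AI ∪ {x, y} ⊆ B := Finset.union_subset hAI1 (hpair.trans hKsub)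
      have hdis2 : Disjoint AI ({x, y} : Finset V) := (hKAI.symm).mono_right hpair
      have hcardC : (AI ∪ {x, y}).card = a + 2 := by
        rw [Finset.card_union_of_disjoint hdis2, Finset.card_pair hxy, hAI3]
      have hd' : Disjoint A (AI ∪ {x, y}) := hd.mono_right hCsub
      have hAB' := cross_mono Finset.Subset.rfl hCsub hAB
      have hlt : A.card + (AI ∪ {x, y}).card < Fintype.card V := by
        rw [hcardC]; omega
      have hF := F0split hG hd' hAB' hlt
      rw [hcardC] at hF
      have haC : omF Gᶜ (AI ∪ {x, y}) ≤ a := omF_mono hCsub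
      have hm2 := max_choice (omF G A) (omF G (AI ∪ {x, y}))
      have hm2a := le_max_left (omF G A) (omF G (AI ∪ {x, y}))
      have hm2b := le_max_right (omF G A) (omF G (AI ∪ {x, y}))
      have h3q : 3 ≤ omF G (AI ∪ {x, y}) := by omega
      obtain ⟨c, hc1, hc2, hc3⟩ := exists_omF G (AI ∪ {x, y})
      have hcint : (c ∩ AI).card ≤ 1 := clique_inter_indep_card hc2 hAI2
      have hcsplit : c = (c ∩ AI) ∪ (c ∩ {x, y}) := by
        rw [← Finset.inter_union_distrib_left, Finset.inter_eq_left.mpr hc1]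
      have hcle := Finset.card_union_le (c ∩ AI) (c ∩ {x, y})
      rw [← hcsplit] at hcle
      have h2le : 2 ≤ (c ∩ {x, y}).card := by
        have : ({x, y} : Finset V).card = 2 := Finset.card_pair hxy
        omega
      have hceq : c ∩ {x, y} = {x, y} := by
        apply Finset.eq_of_subset_of_card_le Finset.inter_subset_right
        rw [Finset.card_pair hxy]; exact h2le
      have hxc : x ∈ c := by
        have hx2 : x ∈ c ∩ {x, y} := by rw [hceq]; exact Finset.mem_insert_self x {y}
        exact Finset.mem_of_mem_inter_left hx2
      have hyc : y ∈ c := by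
        have hy2 : y ∈ c ∩ {x, y} := by rw [hceq]; simp
        exact Finset.mem_of_mem_inter_left hy2
      exact hc2 (Finset.mem_coe.mpr hxc) (Finset.mem_coe.mpr hyc) hxy
    -- for every v ∈ K there is z ∈ AI adjacent to all of K.erase v
    have hzfun : ∀ v ∈ K, ∃ z ∈ AI, ∀ k ∈ K.erase v, G.Adj z k := by
      intro v hv
      obtain ⟨t, ht1, ht2, ht3⟩ := hiv v (hKsub hv)
      have htB : t ⊆ B := ht1.trans (Finset.erase_subset v B)
      have h1 : (t ∩ AI).card ≤ 1 := clique_inter_indep_card ht2 hAI2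
      have htK : t ∩ K ⊆ K.erase v := by
        intro z hz
        rw [Finset.mem_erase]
        refine ⟨?_, Finset.mem_of_mem_inter_right hz⟩
        intro hzv
        exact (Finset.notMem_erase v B) (hzv ▸ ht1 (Finset.mem_of_mem_inter_left hz))
      have hcs := hcardsplit t htB
      have hle1 : (t ∩ K).card ≤ w - 1 := by
        have := Finset.card_le_card htK
        rw [Finset.card_erase_of_mem hv, hKcard] at this
        exact this
      have h1' : (t ∩ AI).card = 1 := by omega
      have hKeq : t ∩ K = K.erase v := by
        apply Finset.eq_of_subset_of_card_le htK
        rw [Finset.card_erase_of_mem hv, hKcard]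
        omega
      obtain ⟨z, hz⟩ := Finset.card_eq_one.mp h1'
      have hzint : z ∈ t ∩ AI := hz ▸ Finset.mem_singleton_self z
      refine ⟨z, Finset.mem_of_mem_inter_right hzint, ?_⟩
      intro k hk
      have hkt : k ∈ t := Finset.mem_of_mem_inter_left (hKeq ▸ hk : k ∈ t ∩ K)
      have hzt : z ∈ t := Finset.mem_of_mem_inter_left hzint
      have hzk : z ≠ k := by
        intro h
        exact Finset.disjoint_left.mp hKAI (Finset.mem_of_mem_erase hk)
          (h ▸ Finset.mem_of_mem_inter_right hzint)
      exact ht2 (Finset.mem_coe.mpr hzt) (Finset.mem_coe.mpr hkt) hzk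
    -- for every z ∈ AI there is y ∈ K nonadjacent to all of AI.erase z
    have hyfun : ∀ z ∈ AI, ∃ y ∈ K, ∀ p ∈ AI.erase z, ¬ G.Adj y p := by
      intro z hz
      obtain ⟨t, ht1, ht2, ht3⟩ := hiii z (hAI1 hz)
      have htB : t ⊆ B := ht1.trans (Finset.erase_subset z B)
      have h1 : (t ∩ K).card ≤ 1 := by
        have := clique_inter_indep_card hKclq ht2
        rwa [Finset.inter_comm] at this
      have htAI : t ∩ AI ⊆ AI.erase z := by
        intro p hp
        rw [Finset.mem_erase]
        refine ⟨?_, Finset.mem_of_mem_inter_right hp⟩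
        intro hpz
        exact (Finset.notMem_erase z B) (hpz ▸ ht1 (Finset.mem_of_mem_inter_left hp))
      have hcs := hcardsplit t htB
      have hle1 : (t ∩ AI).card ≤ a - 1 := by
        have := Finset.card_le_card htAI
        rw [Finset.card_erase_of_mem hz, hAI3] at this
        exact this
      have h1' : (t ∩ K).card = 1 := by omega
      have hAIeq : t ∩ AI = AI.erase z := by
        apply Finset.eq_of_subset_of_card_le htAI
        rw [Finset.card_erase_of_mem hz, hAI3]
        omega
      obtain ⟨y, hy⟩ := Finset.card_eq_one.mp h1'
      have hyint : y ∈ t ∩ K := hy ▸ Finset.mem_singleton_self y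
      refine ⟨y, Finset.mem_of_mem_inter_right hyint, ?_⟩
      intro p hp hadj
      have hpt : p ∈ t := Finset.mem_of_mem_inter_left (hAIeq ▸ hp : p ∈ t ∩ AI)
      have hyt : y ∈ t := Finset.mem_of_mem_inter_left hyint
      have hyp : y ≠ p := by
        intro h
        exact Finset.disjoint_left.mp hKAI (Finset.mem_of_mem_inter_right hyint)
          (h ▸ Finset.mem_of_mem_erase hp)
      exact (ht2 (Finset.mem_coe.mpr hyt) (Finset.mem_coe.mpr hpt) hyp).2 hadj
    -- final contradiction for w ≥ 3
    obtain ⟨v0, hv0⟩ : K.Nonempty := Finset.card_pos.mp (by omega)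
    obtain ⟨z0, hz0AI, hz0adj⟩ := hzfun v0 hv0
    obtain ⟨y0, hy0K, hy0nadj⟩ := hyfun z0 hz0AI
    have hv2ne : ((K.erase v0).erase y0).Nonempty := by
      rw [← Finset.card_pos]
      have h1 := Finset.card_erase_le (s := K.erase v0) (a := y0)
      have h2 : (K.erase v0).card = w - 1 := by rw [Finset.card_erase_of_mem hv0, hKcard]
      have h3 : (K.erase v0).card - 1 ≤ ((K.erase v0).erase y0).card :=
        Finset.pred_card_le_card_erase
      omega
    obtain ⟨v2, hv2⟩ := hv2ne
    have hv2y0 : v2 ≠ y0 := (Finset.mem_erase.mp hv2).1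
    have hv2v0 : v2 ≠ v0 := (Finset.mem_erase.mp (Finset.mem_of_mem_erase hv2)).1
    have hv2K : v2 ∈ K := Finset.mem_of_mem_erase (Finset.mem_of_mem_erase hv2)
    obtain ⟨z2, hz2AI, hz2adj⟩ := hzfun v2 hv2K
    have hz20 : z2 ≠ z0 := by
      rintro rfl
      have hallK : ∀ k ∈ K, G.Adj z2 k := by
        intro k hk
        by_cases hkv2 : k = v2
        · subst hkv2
          exact hz0adj k (Finset.mem_erase.mpr ⟨hv2v0, hk⟩)
        · exact hz2adj k (Finset.mem_erase.mpr ⟨hkv2, hk⟩)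
      have hz2K : z2 ∉ K := fun h => Finset.disjoint_left.mp hKAI h hz2AI
      have hclq2 : G.IsClique (↑(insert z2 K) : Set V) := by
        intro p hp q hq hpq
        rw [Finset.coe_insert, Set.mem_insert_iff] at hp hq
        rcases hp with rfl | hp <;> rcases hq with rfl | hq
        · exact absurd rfl hpq
        · exact hallK q (Finset.mem_coe.mp hq)
        · exact (hallK p (Finset.mem_coe.mp hp)).symm
        · exact hKclq hp hq hpq
      have hcard2 : (insert z2 K).card = w + 1 := by
        rw [Finset.card_insert_of_notMem hz2K, hKcard]
      have hsub2 : insert z2 K ⊆ B := Finset.insert_subset (hAI1 hz2AI) hKsub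
      have := le_omF hsub2 hclq2
      rw [hcard2] at this
      omega
    have hadj : G.Adj z2 y0 := hz2adj y0 (Finset.mem_erase.mpr ⟨fun h => hv2y0 h.symm, hy0K⟩)
    exact hy0nadj z2 (Finset.mem_erase.mpr ⟨hz20, hz2AI⟩) hadj.symm
  · -- case ω(B) = 2
    have hw2 : w = 2 := by omega
    have ha3 : 3 ≤ a := by omega
    obtain ⟨x, y, hxy, hKxy⟩ := Finset.card_eq_two.mp (by rw [hKcard, hw2] : K.card = 2)
    have hxK : x ∈ K := by rw [hKxy]; exact Finset.mem_insert_self x {y}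
    have hyK : y ∈ K := by rw [hKxy]; simp
    have hxAI : x ∉ AI := fun h => Finset.disjoint_left.mp hKAI hxK h
    have hyAI : y ∉ AI := fun h => Finset.disjoint_left.mp hKAI hyK h
    -- every vertex of K has a neighbour in AI
    have hnbr : ∀ s0 ∈ K, ∃ p ∈ AI, G.Adj s0 p := by
      intro s0 hs0
      by_contra hcon
      push_neg at hcon
      have hs0AI : s0 ∉ AI := fun h => Finset.disjoint_left.mp hKAI hs0 h
      have hind : Gᶜ.IsClique (↑(insert s0 AI) : Set V) := by
        intro p hp q hq hpq
        rw [Finset.coe_insert, Set.mem_insert_iff] at hp hq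
        rcases hp with rfl | hp <;> rcases hq with rfl | hq
        · exact absurd rfl hpq
        · exact ⟨hpq, hcon q (Finset.mem_coe.mp hq)⟩
        · exact ⟨hpq, fun hadj => hcon p (Finset.mem_coe.mp hp) hadj.symm⟩
        · exact hAI2 hp hq hpq
      have hcard : (insert s0 AI).card = a + 1 := by
        rw [Finset.card_insert_of_notMem hs0AI, hAI3]
      have := le_omF (Finset.insert_subset (hKsub hs0) hAI1) hind
      rw [hcard] at this
      omega
    -- service structure for each u ∈ AI
    have hserve : ∀ u ∈ AI,
        (∃ s0 ∈ K, ∀ p ∈ AI, (G.Adj s0 p ↔ p = u)) ∨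
        (¬ G.Adj x y ∧ ∃ S, S ⊆ AI ∧ S.card = 2 ∧ u ∈ S ∧
          (∀ s0 ∈ K, ∀ p ∈ AI, G.Adj s0 p → p ∈ S)) := by
      intro u hu
      obtain ⟨t, ht1, ht2, ht3⟩ := hiii u (hAI1 hu)
      have htB : t ⊆ B := ht1.trans (Finset.erase_subset u B)
      have htAI : t ∩ AI ⊆ AI.erase u := by
        intro p hp
        rw [Finset.mem_erase]
        refine ⟨?_, Finset.mem_of_mem_inter_right hp⟩
        intro hpu
        exact (Finset.notMem_erase u B) (hpu ▸ ht1 (Finset.mem_of_mem_inter_left hp))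
      have hcs := hcardsplit t htB
      have hle1 : (t ∩ AI).card ≤ a - 1 := by
        have := Finset.card_le_card htAI
        rw [Finset.card_erase_of_mem hu, hAI3] at this
        exact this
      have hKt2 : (t ∩ K).card ≤ 2 := by
        have : (t ∩ K).card ≤ K.card :=
          Finset.card_le_card (Finset.inter_subset_right)
        omega
      by_cases hboth : x ∈ t ∧ y ∈ t
      · right
        have hxyn : ¬ G.Adj x y :=
          (ht2 (Finset.mem_coe.mpr hboth.1) (Finset.mem_coe.mpr hboth.2) hxy).2
        have hKsubt : K ⊆ t := by
          rw [hKxy]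
          exact Finset.insert_subset hboth.1 (by simpa using hboth.2)
        have htKeq : t ∩ K = K := Finset.inter_eq_right.mpr hKsubt
        have htAIcard : (t ∩ AI).card = a - 2 := by
          rw [htKeq, hKcard, hw2] at hcs
          omega
        refine ⟨hxyn, AI \ t, Finset.sdiff_subset, ?_, ?_, ?_⟩
        · have hX := Finset.card_inter_add_card_sdiff AI t
          rw [Finset.inter_comm] at hX
          omega
        · rw [Finset.mem_sdiff]
          exact ⟨hu, fun h => (Finset.notMem_erase u B) (ht1 h)⟩
        · intro s0 hs0 p hp hadj
          rw [Finset.mem_sdiff]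
          refine ⟨hp, fun hpt => ?_⟩
          have hs0t : s0 ∈ t := hKsubt hs0
          have hs0p : s0 ≠ p := fun h => Finset.disjoint_left.mp hKAI hs0 (h ▸ hp)
          exact (ht2 (Finset.mem_coe.mpr hs0t) (Finset.mem_coe.mpr hpt) hs0p).2 hadj
      · left
        have hKlt : (t ∩ K).card = 1 := by
          rcases Nat.lt_or_ge (t ∩ K).card 2 with hlt | hge
          · omega
          · exfalso
            have heq : t ∩ K = K :=
              Finset.eq_of_subset_of_card_le Finset.inter_subset_right (by omega)
            apply hboth
            constructor
            · have hx' : x ∈ t ∩ K := by rw [heq]; exact hxK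
              exact Finset.mem_of_mem_inter_left hx'
            · have hy' : y ∈ t ∩ K := by rw [heq]; exact hyK
              exact Finset.mem_of_mem_inter_left hy'
        obtain ⟨s0, hs0⟩ := Finset.card_eq_one.mp hKlt
        have hs0int : s0 ∈ t ∩ K := by rw [hs0]; exact Finset.mem_singleton_self s0
        have hs0K : s0 ∈ K := Finset.mem_of_mem_inter_right hs0int
        have hs0t : s0 ∈ t := Finset.mem_of_mem_inter_left hs0int
        have htAIeq : t ∩ AI = AI.erase u := by
          apply Finset.eq_of_subset_of_card_le htAI
          rw [Finset.card_erase_of_mem hu, hAI3]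
          omega
        have hforward : ∀ p ∈ AI, G.Adj s0 p → p = u := by
          intro p hp hadj
          by_contra hpu
          have hpint : p ∈ t ∩ AI := by
            rw [htAIeq]; exact Finset.mem_erase.mpr ⟨hpu, hp⟩
          have hpt : p ∈ t := Finset.mem_of_mem_inter_left hpint
          have hs0p : s0 ≠ p := fun h => Finset.disjoint_left.mp hKAI hs0K (h ▸ hp)
          exact (ht2 (Finset.mem_coe.mpr hs0t) (Finset.mem_coe.mpr hpt) hs0p).2 hadj
        refine ⟨s0, hs0K, fun p hp => ⟨hforward p hp, ?_⟩⟩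
        rintro rfl
        obtain ⟨p0, hp0AI, hp0adj⟩ := hnbr s0 hs0K
        exact (hforward p0 hp0AI hp0adj) ▸ hp0adj
    -- pigeonhole helper
    have serversInj : ∀ s0 : V, ∀ u ∈ AI, ∀ u' ∈ AI, u ≠ u' →
        (∀ p ∈ AI, (G.Adj s0 p ↔ p = u)) → (∀ p ∈ AI, (G.Adj s0 p ↔ p = u')) → False := by
      intro s0 u hu u' hu' hne h1 h2
      exact hne ((h1 u' hu').mp ((h2 u' hu').mpr rfl)).symm
    -- three distinct elements of AI
    obtain ⟨u1, hu1⟩ : AI.Nonempty := Finset.card_pos.mp (by omega)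
    obtain ⟨u2, hu2'⟩ : (AI.erase u1).Nonempty := by
      rw [← Finset.card_pos, Finset.card_erase_of_mem hu1]; omega
    have hu2 : u2 ∈ AI := Finset.mem_of_mem_erase hu2'
    have h21 : u2 ≠ u1 := (Finset.mem_erase.mp hu2').1
    obtain ⟨u3, hu3'⟩ : ((AI.erase u1).erase u2).Nonempty := by
      rw [← Finset.card_pos]
      have hpc := Finset.pred_card_le_card_erase (s := AI.erase u1) (a := u2)
      rw [Finset.card_erase_of_mem hu1] at hpc
      omega
    have hu3 : u3 ∈ AI := Finset.mem_of_mem_erase (Finset.mem_of_mem_erase hu3')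
    have h32 : u3 ≠ u2 := (Finset.mem_erase.mp hu3').1
    have h31 : u3 ≠ u1 := (Finset.mem_erase.mp (Finset.mem_of_mem_erase hu3')).1
    have pigeon : ¬ (∀ u ∈ AI, ∃ s0 ∈ K, ∀ p ∈ AI, (G.Adj s0 p ↔ p = u)) := by
      intro htype
      obtain ⟨s1, hs1K, hh1⟩ := htype u1 hu1
      obtain ⟨s2, hs2K, hh2⟩ := htype u2 hu2
      obtain ⟨s3, hs3K, hh3⟩ := htype u3 hu3
      rw [hKxy] at hs1K hs2K hs3K
      simp only [Finset.mem_insert, Finset.mem_singleton] at hs1K hs2K hs3K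
      have hcases : s1 = s2 ∨ s1 = s3 ∨ s2 = s3 := by
        rcases hs1K with h1e | h1e <;> rcases hs2K with h2e | h2e <;>
          rcases hs3K with h3e | h3e <;> rw [h1e, h2e, h3e] <;> simp
      rcases hcases with he | he | he
      · rw [he] at hh1
        exact serversInj s2 u1 hu1 u2 hu2 (Ne.symm h21) hh1 hh2
      · rw [he] at hh1
        exact serversInj s3 u1 hu1 u3 hu3 (Ne.symm h31) hh1 hh3
      · rw [he] at hh2
        exact serversInj s3 u2 hu2 u3 hu3 (Ne.symm h32) hh2 hh3
    by_cases hxyadj : G.Adj x y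
    · apply pigeon
      intro u hu
      rcases hserve u hu with h | ⟨hn, _⟩
      · exact h
      · exact absurd hxyadj hn
    · set P := AI.filter (fun p => G.Adj x p ∨ G.Adj y p) with hPdef
      have hPsub : P ⊆ AI := Finset.filter_subset _ _
      have hP2 : 2 ≤ P.card := by
        by_contra hcon
        push_neg at hcon
        obtain ⟨p0, hp0AI, hp0adj⟩ := hnbr x hxK
        have hp0P : p0 ∈ P := Finset.mem_filter.mpr ⟨hp0AI, Or.inl hp0adj⟩
        have hPone : P = {p0} :=
          (Finset.eq_of_subset_of_card_le (Finset.singleton_subset_iff.mpr hp0P)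
            (by simpa using Nat.lt_succ_iff.mp hcon)).symm
        have hnadjK : ∀ s0 ∈ K, ∀ q ∈ AI.erase p0, ¬ G.Adj s0 q := by
          intro s0 hs0 q hq hadj
          have hqP : q ∈ P := by
            refine Finset.mem_filter.mpr ⟨Finset.mem_of_mem_erase hq, ?_⟩
            rw [hKxy] at hs0
            rcases Finset.mem_insert.mp hs0 with rfl | hs0'
            · exact Or.inl hadj
            · rw [Finset.mem_singleton] at hs0'
              subst hs0'
              exact Or.inr hadj
          rw [hPone, Finset.mem_singleton] at hqP
          exact (Finset.mem_erase.mp hq).1 hqP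
        set J := insert x (insert y (AI.erase p0)) with hJdef
        have hmemJ : ∀ r ∈ J, r = x ∨ r = y ∨ r ∈ AI.erase p0 := by
          intro r hr
          rcases Finset.mem_insert.mp hr with rfl | hr'
          · exact Or.inl rfl
          · rcases Finset.mem_insert.mp hr' with rfl | hr''
            · exact Or.inr (Or.inl rfl)
            · exact Or.inr (Or.inr hr'')
        have hkey : ∀ p ∈ J, ∀ q ∈ J, p ≠ q → ¬ G.Adj p q := by
          intro p hp q hq hpq hadj
          rcases hmemJ p hp with rfl | rfl | hp' <;> rcases hmemJ q hq with h | h | h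
          · exact hpq (h ▸ rfl)
          · exact hxyadj (h ▸ hadj)
          · exact hnadjK p hxK q h hadj
          · exact hxyadj (by rw [h] at hadj; exact hadj.symm)
          · exact hpq (h ▸ rfl)
          · exact hnadjK p hyK q h hadj
          · exact hnadjK q (h ▸ hxK) p hp' hadj.symm
          · exact hnadjK q (h ▸ hyK) p hp' hadj.symm
          · exact (hAI2 (Finset.mem_coe.mpr (Finset.mem_of_mem_erase hp'))
              (Finset.mem_coe.mpr (Finset.mem_of_mem_erase h)) hpq).2 hadj
        have hind : Gᶜ.IsClique (↑J : Set V) := by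
          intro p hp q hq hpq
          exact ⟨hpq, hkey p (Finset.mem_coe.mp hp) q (Finset.mem_coe.mp hq) hpq⟩
        have hyJ : y ∉ AI.erase p0 := fun h => hyAI (Finset.mem_of_mem_erase h)
        have hxJ : x ∉ insert y (AI.erase p0) := by
          intro h
          rcases Finset.mem_insert.mp h with rfl | h'
          · exact hxy rfl
          · exact hxAI (Finset.mem_of_mem_erase h')
        have hcardJ : J.card = a + 1 := by
          rw [hJdef, Finset.card_insert_of_notMem hxJ, Finset.card_insert_of_notMem hyJ,
            Finset.card_erase_of_mem hp0AI, hAI3]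
          omega
        have hJB : J ⊆ B := by
          rw [hJdef]
          exact Finset.insert_subset (hKsub hxK) (Finset.insert_subset (hKsub hyK)
            ((Finset.erase_subset p0 AI).trans hAI1))
        have := le_omF hJB hind
        rw [hcardJ] at this
        omega
      have hPS : ∀ S : Finset V, (∀ s0 ∈ K, ∀ p ∈ AI, G.Adj s0 p → p ∈ S) → P ⊆ S := by
        intro S hS4 p hp
        obtain ⟨hpAI, hpor⟩ := Finset.mem_filter.mp hp
        rcases hpor with h | h
        · exact hS4 x hxK p hpAI h
        · exact hS4 y hyK p hpAI h
      have hallP : ∀ u ∈ AI, u ∈ P := by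
        intro u hu
        rcases hserve u hu with ⟨s0, hs0K, hiff⟩ | ⟨hnadjxy, S, hS1, hS2, hS3, hS4⟩
        · have hadj : G.Adj s0 u := (hiff u hu).mpr rfl
          refine Finset.mem_filter.mpr ⟨hu, ?_⟩
          rw [hKxy] at hs0K
          rcases Finset.mem_insert.mp hs0K with rfl | hs0'
          · exact Or.inl hadj
          · rw [Finset.mem_singleton] at hs0'
            subst hs0'
            exact Or.inr hadj
        · have hPSu : P = S :=
            Finset.eq_of_subset_of_card_le (hPS S hS4) (by rw [hS2]; exact hP2)
          rw [hPSu]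
          exact hS3
      have hPAI : P = AI := Finset.Subset.antisymm hPsub (fun u hu => hallP u hu)
      apply pigeon
      intro u hu
      rcases hserve u hu with h | ⟨hnadjxy, S, hS1, hS2, hS3, hS4⟩
      · exact h
      · exfalso
        have hAIS : AI ⊆ S := hPAI ▸ hPS S hS4
        have := Finset.card_le_card hAIS
        rw [hS2, hAI3] at this
        omega

end CaseCT

section Final
variable {V : Type*} [Fintype V] {G : SimpleGraph V} {A B : Finset V}

lemma main_disconnected (hG : MinimalNonSumPerfect G) (hU : A ∪ B = Finset.univ)
    (hd : Disjoint A B) (hAB : ∀ x ∈ A, ∀ y ∈ B, ¬ G.Adj x y)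
    (hA : A.Nonempty) (hB : B.Nonempty) (h7 : 7 ≤ Fintype.card V) : False := by
  have hU' : B ∪ A = Finset.univ := by rw [Finset.union_comm]; exact hU
  have hAB' := cross_symm hAB
  rcases clique_or_tight hG hU' hd.symm hAB' hB hA with hAclq | htA <;>
    rcases clique_or_tight hG hU hd hAB hA hB with hBclq | htB
  · exact case_cliques hG hU hd hAB hA hB hAclq hBclq h7
  · exact case_CT hG hU hd hAB hA hB hAclq htB h7
  · exact case_CT hG hU' hd.symm hAB' hB hA hBclq htA h7
  · have hEQ := splitEQ hG hU hd hAB hA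
    have h2A : 2 ≤ omF G A := two_le_oB hG hU' hd.symm hAB' hB hA
    have h2B : 2 ≤ omF G B := two_le_oB hG hU hd hAB hA hB
    have hm := max_choice (omF G A) (omF G B)
    have hma := le_max_left (omF G A) (omF G B)
    have hmb := le_max_right (omF G A) (omF G B)
    omega

end Final


/-- A minimal non-sum-perfect graph on at least 7 vertices is connected. -/
theorem stmt15 {V : Type*} [Fintype V] (G : SimpleGraph V)
    (hG : MinimalNonSumPerfect G) (hcard : 7 ≤ Fintype.card V) :
    G.Connected := by
  by_contra hnc
  have hpos : 0 < Fintype.card V := by omega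
  have hne : Nonempty V := Fintype.card_pos_iff.mp hpos
  rw [SimpleGraph.connected_iff] at hnc
  push_neg at hnc
  have hnp : ¬ G.Preconnected := fun h => (hnc h).false hne.some
  rw [SimpleGraph.Preconnected] at hnp
  push_neg at hnp
  obtain ⟨u, v, huv⟩ := hnp
  set A := Finset.univ.filter (fun x => G.Reachable u x) with hAdef
  set B := Finset.univ.filter (fun x => ¬ G.Reachable u x) with hBdef
  have hU : A ∪ B = Finset.univ := by
    ext z
    simp only [hAdef, hBdef, Finset.mem_union, Finset.mem_filter, Finset.mem_univ, true_and]
    tauto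
  have hd : Disjoint A B := by
    rw [Finset.disjoint_left]
    intro z hz hz'
    rw [hAdef, Finset.mem_filter] at hz
    rw [hBdef, Finset.mem_filter] at hz'
    exact hz'.2 hz.2
  have hA : A.Nonempty := ⟨u, by rw [hAdef, Finset.mem_filter]; exact ⟨Finset.mem_univ u, Reachable.refl u⟩⟩
  have hB : B.Nonempty := ⟨v, by rw [hBdef, Finset.mem_filter]; exact ⟨Finset.mem_univ v, huv⟩⟩
  have hAB : ∀ x ∈ A, ∀ y ∈ B, ¬ G.Adj x y := by
    intro x hx y hy hadj
    rw [hAdef, Finset.mem_filter] at hx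
    rw [hBdef, Finset.mem_filter] at hy
    exact hy.2 (hx.2.trans hadj.reachable)
  exact main_disconnected hG hU hd hAB hA hB hcard
end

section
/- Let G be a minimal non-sum-perfect graph. Then max{α(G), ω(G)} ≤ 3, and hence |V(G)| ≤ 7. -/
open SimpleGraph Finset

section SPAuxSection
set_option maxHeartbeats 1000000
set_option linter.unusedSectionVars false

namespace SPAux

variable {V : Type*} [Fintype V] {W : Type*} [Fintype W]


variable {V : Type*} [Fintype V] {W : Type*} [Fintype W]

lemma cliqueSet_nonempty (G : SimpleGraph V) :
    Set.Nonempty {n | ∃ s : Finset V, G.IsNClique n s} :=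
  ⟨0, ∅, by simp⟩

lemma cliqueSet_bdd (G : SimpleGraph V) : BddAbove {n | ∃ s : Finset V, G.IsNClique n s} := by
  refine ⟨Fintype.card V, ?_⟩
  rintro n ⟨s, hs⟩
  rw [← hs.card_eq, ← Finset.card_univ]
  exact Finset.card_le_univ s

lemma exists_omega_clique (G : SimpleGraph V) :
    ∃ s : Finset V, G.IsNClique (omegaNum G) s :=
  Nat.sSup_mem (cliqueSet_nonempty G) (cliqueSet_bdd G)

lemma clique_card_le (G : SimpleGraph V) {s : Finset V} (h : G.IsClique (s : Set V)) :
    s.card ≤ omegaNum G :=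
  le_csSup (cliqueSet_bdd G) ⟨s, h, rfl⟩

lemma omega_le_of_embedding {G : SimpleGraph V} {H : SimpleGraph W} (f : G ↪g H) :
    omegaNum G ≤ omegaNum H := by
  obtain ⟨s, hs⟩ := exists_omega_clique G
  have h2 : H.IsClique ((s.map f.toEmbedding : Finset W) : Set W) := by
    intro a ha b hb hab
    simp only [Finset.coe_map, Set.mem_image, Finset.mem_coe] at ha hb
    obtain ⟨a', ha', rfl⟩ := ha
    obtain ⟨b', hb', rfl⟩ := hb
    exact f.map_rel_iff.2 (hs.isClique ha' hb' (fun h => hab (by rw [h])))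
  have h3 := clique_card_le H h2
  rwa [Finset.card_map, hs.card_eq] at h3

lemma omega_iso {G : SimpleGraph V} {H : SimpleGraph W} (f : G ≃g H) :
    omegaNum G = omegaNum H :=
  le_antisymm (omega_le_of_embedding f.toEmbedding) (omega_le_of_embedding f.symm.toEmbedding)

def isoCompl {G : SimpleGraph V} {H : SimpleGraph W} (f : G ≃g H) : Gᶜ ≃g Hᶜ where
  toEquiv := f.toEquiv
  map_rel_iff' := by
    intro a b
    simp only [compl_adj]
    constructor
    · rintro ⟨h1, h2⟩
      exact ⟨fun h => h1 (by rw [h]), fun h => h2 (f.map_rel_iff.2 h)⟩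
    · rintro ⟨h1, h2⟩
      exact ⟨fun h => h1 (f.toEquiv.injective h), fun h => h2 (f.map_rel_iff.1 h)⟩

lemma alpha_iso {G : SimpleGraph V} {H : SimpleGraph W} (f : G ≃g H) :
    alphaNum G = alphaNum H :=
  omega_iso (isoCompl f)

lemma compl_induce (G : SimpleGraph V) (s : Set V) :
    (G.induce s)ᶜ = (Gᶜ).induce s := by
  ext a b
  simp only [compl_adj, comap_adj, Function.Embedding.coe_subtype]
  constructor
  · rintro ⟨h1, h2⟩
    exact ⟨fun h => h1 (Subtype.coe_injective h), h2⟩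
  · rintro ⟨h1, h2⟩
    exact ⟨fun h => h1 (by rw [h]), h2⟩

def induceCoeUnivIso (H : SimpleGraph W) :
    H.induce ((Finset.univ : Finset W) : Set W) ≃g H where
  toEquiv := Equiv.subtypeUnivEquiv (fun x => by simp)
  map_rel_iff' := by
    intro a b
    simp only [comap_adj, Function.Embedding.coe_subtype]
    rfl

lemma sp_card_le {H : SimpleGraph W} (h : SumPerfect H) :
    Fintype.card W ≤ alphaNum H + omegaNum H := by
  have h1 := h Finset.univ
  rw [omega_iso (induceCoeUnivIso H), alpha_iso (induceCoeUnivIso H)] at h1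
  simpa using h1

lemma clique_transfer {G : SimpleGraph V} (s : Finset V) :
    ∃ t : Finset V, t ⊆ s ∧ G.IsClique (t : Set V) ∧
      t.card = omegaNum (G.induce (s : Set V)) := by
  obtain ⟨t, ht⟩ := exists_omega_clique (G.induce (s : Set V))
  refine ⟨t.map (Function.Embedding.subtype _), ?_, ?_, ?_⟩
  · intro x hx
    simp only [Finset.mem_map, Function.Embedding.coe_subtype] at hx
    obtain ⟨a, _, rfl⟩ := hx
    simpa using a.2
  · intro x hx y hy hxy
    simp only [Finset.coe_map, Set.mem_image, Finset.mem_coe,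
      Function.Embedding.coe_subtype] at hx hy
    obtain ⟨a, ha, rfl⟩ := hx
    obtain ⟨b, hb, rfl⟩ := hy
    exact ht.isClique ha hb (fun h => hxy (by rw [h]))
  · rw [Finset.card_map, ht.card_eq]

lemma stable_transfer {G : SimpleGraph V} (s : Finset V) :
    ∃ t : Finset V, t ⊆ s ∧ Gᶜ.IsClique (t : Set V) ∧
      t.card = alphaNum (G.induce (s : Set V)) := by
  have h : alphaNum (G.induce (s : Set V)) = omegaNum ((Gᶜ).induce (s : Set V)) := by
    unfold alphaNum
    rw [compl_induce]
  rw [h]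
  exact clique_transfer s


lemma fresh4 [DecidableEq V] (X : Finset V) (p q r t : V) (h : 5 ≤ X.card) :
    ∃ b ∈ X, b ≠ p ∧ b ≠ q ∧ b ≠ r ∧ b ≠ t := by
  have h4 : ({p, q, r, t} : Finset V).card ≤ 4 := by
    refine le_trans (Finset.card_insert_le _ _) ?_
    refine Nat.succ_le_succ (le_trans (Finset.card_insert_le _ _) ?_)
    refine Nat.succ_le_succ (le_trans (Finset.card_insert_le _ _) ?_)
    exact Nat.succ_le_succ (le_of_eq (Finset.card_singleton _))
  have hle : X.card ≤ (X \ {p, q, r, t}).card + ({p, q, r, t} : Finset V).card :=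
    Finset.card_le_card_sdiff_add_card
  have : 0 < (X \ {p, q, r, t}).card := by omega
  obtain ⟨b, hb⟩ := Finset.card_pos.mp this
  rw [Finset.mem_sdiff] at hb
  refine ⟨b, hb.1, ?_, ?_, ?_, ?_⟩ <;>
    · intro hh
      exact hb.2 (by simp [hh])

lemma pick3 (x1 x2 x3 p q : V) (h12 : x1 ≠ x2) (h13 : x1 ≠ x3) (h23 : x2 ≠ x3) :
    ∃ t, (t = x1 ∨ t = x2 ∨ t = x3) ∧ t ≠ p ∧ t ≠ q := by
  by_cases a1 : x1 = p
  · by_cases a2 : x2 = q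
    · exact ⟨x3, Or.inr (Or.inr rfl), by rw [← a1]; exact h13.symm, by rw [← a2]; exact h23.symm⟩
    · by_cases a3 : x2 = p
      · exact absurd (a3.trans a1.symm) (Ne.symm h12)
      · exact ⟨x2, Or.inr (Or.inl rfl), a3, a2⟩
  · by_cases a2 : x1 = q
    · by_cases a3 : x2 = p
      · exact ⟨x3, Or.inr (Or.inr rfl), by rw [← a3]; exact h23.symm, by rw [← a2]; exact h13.symm⟩
      · exact ⟨x2, Or.inr (Or.inl rfl), a3, fun h => h12 (h.trans a2.symm).symm⟩
    · exact ⟨x1, Or.inl rfl, a1, a2⟩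

lemma two_mem [DecidableEq V] (X : Finset V) (h : 2 ≤ X.card) :
    ∃ u ∈ X, ∃ v ∈ X, u ≠ v := by
  obtain ⟨u, hu⟩ := Finset.card_pos.mp (show 0 < X.card by omega)
  have h2 : 0 < (X.erase u).card := by
    have := Finset.card_erase_of_mem hu
    omega
  obtain ⟨v, hv⟩ := Finset.card_pos.mp h2
  exact ⟨u, hu, v, Finset.mem_of_mem_erase hv, fun h => (Finset.ne_of_mem_erase hv) h.symm⟩

lemma three_mem [DecidableEq V] (X : Finset V) (h : 3 ≤ X.card) :
    ∃ u ∈ X, ∃ v ∈ X, ∃ z ∈ X, u ≠ v ∧ u ≠ z ∧ v ≠ z := by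
  obtain ⟨u, hu⟩ := Finset.card_pos.mp (show 0 < X.card by omega)
  have h2 : 2 ≤ (X.erase u).card := by
    have := Finset.card_erase_of_mem hu
    omega
  obtain ⟨v, hv, z, hz, hvz⟩ := two_mem _ h2
  exact ⟨u, hu, v, Finset.mem_of_mem_erase hv, z, Finset.mem_of_mem_erase hz,
    fun h => (Finset.ne_of_mem_erase hv) h.symm, fun h => (Finset.ne_of_mem_erase hz) h.symm, hvz⟩

lemma erase_card_ge [DecidableEq V] (X : Finset V) (k : V) :
    X.card ≤ (X.erase k).card + 1 := by
  have hsub : X ⊆ insert k (X.erase k) := by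
    intro x hx
    by_cases hxk : x = k
    · rw [hxk]; exact Finset.mem_insert_self k _
    · exact Finset.mem_insert_of_mem (Finset.mem_erase.mpr ⟨hxk, hx⟩)
  have h1 := Finset.card_le_card hsub
  have h2 := Finset.card_insert_le k (X.erase k)
  omega

lemma core (G : SimpleGraph V) (a w : ℕ)
    (hcl : ∀ t : Finset V, G.IsClique (t : Set V) → t.card ≤ w)
    (hst : ∀ t : Finset V, Gᶜ.IsClique (t : Set V) → t.card ≤ a)
    (hn : Fintype.card V = a + w + 1)
    (hKv : ∀ v : V, ∃ K : Finset V, G.IsClique (K : Set V) ∧ K.card = w ∧ v ∉ K)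
    (hSv : ∀ v : V, ∃ S : Finset V, Gᶜ.IsClique (S : Set V) ∧ S.card = a ∧ v ∉ S)
    (hw : 4 ≤ w) : False := by
  classical
  -- wrappers
  have hclique : ∀ t : Finset V, (∀ x ∈ t, ∀ y ∈ t, x ≠ y → G.Adj x y) → t.card ≤ w := by
    intro t ht
    exact hcl t (fun x hx y hy hne => ht x (Finset.mem_coe.mp hx) y (Finset.mem_coe.mp hy) hne)
  have hstable : ∀ t : Finset V, (∀ x ∈ t, ∀ y ∈ t, x ≠ y → ¬G.Adj x y) → t.card ≤ a := by
    intro t ht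
    refine hst t (fun x hx y hy hne => ?_)
    rw [compl_adj]
    exact ⟨hne, ht x (Finset.mem_coe.mp hx) y (Finset.mem_coe.mp hy) hne⟩
  -- a maximum stable set
  have hpos : 0 < Fintype.card V := by omega
  obtain ⟨v0⟩ := Fintype.card_pos_iff.mp hpos
  obtain ⟨S, hScl, hScard, -⟩ := hSv v0
  have hSst : ∀ x ∈ S, ∀ y ∈ S, x ≠ y → ¬G.Adj x y := by
    intro x hx y hy hne
    exact ((G.compl_adj x y).mp (hScl (Finset.mem_coe.mpr hx) (Finset.mem_coe.mpr hy) hne)).2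
  set B : Finset V := Finset.univ \ S with hBdef
  have hBmem : ∀ x : V, x ∈ B ↔ x ∉ S := by
    intro x
    simp [hBdef]
  have hBcard : B.card = w + 1 := by
    rw [hBdef, Finset.card_sdiff_of_subset (Finset.subset_univ S), Finset.card_univ, hn, hScard]
    omega
  have hSB : ∀ x ∈ S, ∀ y ∈ B, x ≠ y := by
    intro x hx y hy h
    rw [hBmem] at hy
    exact hy (h ▸ hx)
  -- every vertex outside S has a neighbour in S
  have L3 : ∀ v ∈ B, ∃ t ∈ S, G.Adj v t := by
    intro v hv
    by_contra hcon
    push_neg at hcon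
    have hins : (insert v S).card ≤ a := by
      refine hstable _ ?_
      intro x hx y hy hne
      rcases Finset.mem_insert.mp hx with h1 | h1 <;> rcases Finset.mem_insert.mp hy with h2 | h2
      · exact absurd (h1.trans h2.symm) hne
      · subst h1; exact hcon y h2
      · subst h2; intro hadj; exact hcon x h1 hadj.symm
      · exact hSst x h1 y h2 hne
    rw [Finset.card_insert_of_notMem (fun h => (hBmem v).mp hv h), hScard] at hins
    omega
  -- intersection of a clique with S has at most one element
  have cliq_inter : ∀ Q : Finset V, G.IsClique (Q : Set V) → ∀ x ∈ Q, x ∈ S → ∀ y ∈ Q, y ∈ S → x = y := by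
    intro Q hQ x hxQ hxS y hyQ hyS
    by_contra hne
    exact hSst x hxS y hyS hne (hQ (Finset.mem_coe.mpr hxQ) (Finset.mem_coe.mpr hyQ) hne)
  -- every max clique avoiding b covers B \ {b} except at most one vertex
  have ebL : ∀ b ∈ B, ∃ e, ∀ u v : V, u ∈ B → v ∈ B → u ≠ b → v ≠ b → u ≠ v →
      ¬G.Adj u v → (e = u ∨ e = v) := by
    intro b hb
    obtain ⟨Q, hQcl, hQcard, hbQ⟩ := hKv b
    have hQS : (Q ∩ S).card ≤ 1 := by
      rw [Finset.card_le_one]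
      intro x hx y hy
      rw [Finset.mem_inter] at hx hy
      exact cliq_inter Q hQcl x hx.1 hx.2 y hy.1 hy.2
    have hQsplit : (Q ∩ S).card + (Q \ S).card = Q.card := Finset.card_inter_add_card_sdiff Q S
    have hQB : Q \ S ⊆ B.erase b := by
      intro x hx
      rw [Finset.mem_sdiff] at hx
      rw [Finset.mem_erase, hBmem]
      exact ⟨fun h => hbQ (h ▸ hx.1), hx.2⟩
    have hQBcard : w - 1 ≤ (Q \ S).card := by omega
    have hEB : (B.erase b).card = w := by
      rw [Finset.card_erase_of_mem hb, hBcard]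
      omega
    set R : Finset V := (B.erase b) \ (Q \ S) with hRdef
    have hRcard : R.card ≤ 1 := by
      rw [hRdef, Finset.card_sdiff_of_subset hQB, hEB]
      omega
    have hkey : ∀ u v : V, u ∈ B → v ∈ B → u ≠ b → v ≠ b → u ≠ v → ¬G.Adj u v →
        u ∈ R ∨ v ∈ R := by
      intro u v hu hv hub hvb huv hnadj
      by_contra hc
      push_neg at hc
      have hu' : u ∈ Q \ S := by
        have : u ∈ B.erase b := Finset.mem_erase.mpr ⟨hub, hu⟩
        by_contra h
        exact hc.1 (Finset.mem_sdiff.mpr ⟨this, h⟩)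
      have hv' : v ∈ Q \ S := by
        have : v ∈ B.erase b := Finset.mem_erase.mpr ⟨hvb, hv⟩
        by_contra h
        exact hc.2 (Finset.mem_sdiff.mpr ⟨this, h⟩)
      exact hnadj (hQcl (Finset.mem_coe.mpr (Finset.mem_sdiff.mp hu').1)
        (Finset.mem_coe.mpr (Finset.mem_sdiff.mp hv').1) huv)
    by_cases hR : R.Nonempty
    · obtain ⟨e, he⟩ := hR
      refine ⟨e, fun u v hu hv hub hvb huv hnadj => ?_⟩
      rcases hkey u v hu hv hub hvb huv hnadj with h | h
      · exact Or.inl (Finset.card_le_one.mp hRcard e he u h)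
      · exact Or.inr (Finset.card_le_one.mp hRcard e he v h)
    · refine ⟨b, fun u v hu hv hub hvb huv hnadj => ?_⟩
      rcases hkey u v hu hv hub hvb huv hnadj with h | h
      · exact absurd ⟨u, h⟩ hR
      · exact absurd ⟨v, h⟩ hR
  have hB5 : 5 ≤ B.card := by omega
  -- B is not a clique
  have hBe : ∃ u ∈ B, ∃ v ∈ B, u ≠ v ∧ ¬G.Adj u v := by
    by_contra hcon
    push_neg at hcon
    have := hclique B (fun x hx y hy hne => hcon x hx y hy hne)
    omega
  -- star lemma
  have star : ∃ d ∈ B, (∀ u v : V, u ∈ B → v ∈ B → u ≠ v → ¬G.Adj u v → (d = u ∨ d = v)) ∧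
      ∃ x ∈ B, x ≠ d ∧ ¬G.Adj d x := by
    obtain ⟨u0, hu0, v0', hv0, hne0, hnadj0⟩ := hBe
    have meet : ∀ u v p q : V, u ∈ B → v ∈ B → p ∈ B → q ∈ B → u ≠ v → p ≠ q →
        ¬G.Adj u v → ¬G.Adj p q → u = p ∨ u = q ∨ v = p ∨ v = q := by
      intro u v p q hu hv hp hq huv hpq hn1 hn2
      by_contra hc
      push_neg at hc
      obtain ⟨h1, h2, h3, h4⟩ := hc
      obtain ⟨b, hbB, hb1, hb2, hb3, hb4⟩ := fresh4 B u v p q hB5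
      obtain ⟨e, he⟩ := ebL b hbB
      rcases he u v hu hv (Ne.symm hb1) (Ne.symm hb2) huv hn1 with rfl | rfl <;>
        rcases he p q hp hq (Ne.symm hb3) (Ne.symm hb4) hpq hn2 with h | h <;> tauto
    have notri : ∀ p q r : V, p ∈ B → q ∈ B → r ∈ B → p ≠ q → p ≠ r → q ≠ r →
        ¬G.Adj p q → ¬G.Adj p r → ¬G.Adj q r → False := by
      intro p q r hp hq hr hpq hpr hqr h1 h2 h3
      obtain ⟨b, hbB, hb1, hb2, hb3, -⟩ := fresh4 B p q r r hB5
      obtain ⟨e, he⟩ := ebL b hbB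
      have hA := he p q hp hq (Ne.symm hb1) (Ne.symm hb2) hpq h1
      have hB' := he p r hp hr (Ne.symm hb1) (Ne.symm hb3) hpr h2
      have hC := he q r hq hr (Ne.symm hb2) (Ne.symm hb3) hqr h3
      rcases hA with rfl | rfl
      · rcases hC with h | h
        · exact hpq h
        · exact hpr h
      · rcases hB' with h | h
        · exact hpq h.symm
        · exact hqr h
    by_cases hall : ∀ u v : V, u ∈ B → v ∈ B → u ≠ v → ¬G.Adj u v → (u0 = u ∨ u0 = v)
    · exact ⟨u0, hu0, hall, v0', hv0, Ne.symm hne0, hnadj0⟩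
    · push_neg at hall
      obtain ⟨u1, v1, hu1, hv1, hne1, hnadj1, hd1, hd2⟩ := hall
      have hm := meet u0 v0' u1 v1 hu0 hv0 hu1 hv1 hne0 hne1 hnadj0 hnadj1
      have hz : ∃ z, z ∈ B ∧ z ≠ v0' ∧ z ≠ u0 ∧ ¬G.Adj z v0' := by
        rcases hm with h | h | h | h
        · exact absurd h hd1
        · exact absurd h hd2
        · refine ⟨v1, hv1, ?_, Ne.symm hd2, ?_⟩
          · rw [← h] at hne1
            exact Ne.symm hne1
          · rw [← h] at hnadj1
            intro hadj
            exact hnadj1 hadj.symm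
        · refine ⟨u1, hu1, ?_, Ne.symm hd1, ?_⟩
          · rw [← h] at hne1
            exact hne1
          · rw [← h] at hnadj1
            exact hnadj1
      obtain ⟨z, hzB, hzv0, hzu0, hznadj⟩ := hz
      refine ⟨v0', hv0, ?_, u0, hu0, hne0, fun h => hnadj0 h.symm⟩
      intro u v hu hv huv hnadj
      by_contra hc
      push_neg at hc
      obtain ⟨hcu, hcv⟩ := hc
      have hcu' : u ≠ v0' := fun h => hcu h.symm
      have hcv' : v ≠ v0' := fun h => hcv h.symm
      have h1 := meet u v u0 v0' hu hv hu0 hv0 huv hne0 hnadj hnadj0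
      have h2 := meet u v z v0' hu hv hzB hv0 huv hzv0 hnadj hznadj
      rcases h1 with e1 | e1 | e1 | e1
      · rcases h2 with e2 | e2 | e2 | e2
        · exact hzu0 (e2.symm.trans e1)
        · exact hcu' e2
        · exact notri u0 z v0' hu0 hzB hv0 (Ne.symm hzu0) hne0 hzv0
            (fun h => hnadj (by rw [e1, e2]; exact h)) hnadj0 hznadj
        · exact hcv' e2
      · exact hcu' e1
      · rcases h2 with e2 | e2 | e2 | e2
        · exact notri u0 z v0' hu0 hzB hv0 (Ne.symm hzu0) hne0 hzv0
            (fun h => hnadj (by rw [e2, e1]; exact h.symm)) hnadj0 hznadj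
        · exact hcu' e2
        · exact hzu0 (e2.symm.trans e1)
        · exact hcv' e2
      · exact hcv' e1
  obtain ⟨d, hdB, hstar, x0, hx0B, hx0d, hx0nadj⟩ := star
  set K : Finset V := B.erase d with hKdef
  have hKsub : K ⊆ B := Finset.erase_subset d B
  have hKcard : K.card = w := by
    rw [hKdef, Finset.card_erase_of_mem hdB, hBcard]
    omega
  have hKmem : ∀ x : V, x ∈ K ↔ (x ∈ B ∧ x ≠ d) := by
    intro x
    rw [hKdef, Finset.mem_erase]
    tauto
  have hKcl : ∀ x ∈ K, ∀ y ∈ K, x ≠ y → G.Adj x y := by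
    intro x hx y hy hne
    by_contra hnadj
    rcases hstar x y (hKsub hx) (hKsub hy) hne hnadj with h | h
    · exact ((hKmem x).mp hx).2 h.symm
    · exact ((hKmem y).mp hy).2 h.symm
  set D : Finset V := K.filter (fun k => ¬ G.Adj d k) with hDdef
  have hDmem : ∀ x : V, x ∈ D ↔ (x ∈ K ∧ ¬G.Adj d x) := by
    intro x
    rw [hDdef, Finset.mem_filter]
  have hDsub : D ⊆ K := Finset.filter_subset _ _
  have hx0D : x0 ∈ D := (hDmem x0).mpr ⟨(hKmem x0).mpr ⟨hx0B, hx0d⟩, hx0nadj⟩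
  have hkd : ∀ k ∈ K, k ≠ d := fun k hk => ((hKmem k).mp hk).2
  have honly : ∀ u v : V, u ∈ B → v ∈ B → u ≠ v → ¬G.Adj u v →
      (u = d ∧ v ∈ D) ∨ (v = d ∧ u ∈ D) := by
    intro u v hu hv hne hnadj
    rcases hstar u v hu hv hne hnadj with h | h
    · left
      refine ⟨h.symm, (hDmem v).mpr ⟨(hKmem v).mpr ⟨hv, fun hh => hne (h.symm.trans hh.symm)⟩, ?_⟩⟩
      rw [h]
      exact hnadj
    · right
      refine ⟨h.symm, (hDmem u).mpr ⟨(hKmem u).mpr ⟨hu, fun hh => hne (hh.trans h)⟩, ?_⟩⟩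
      rw [h]
      intro hadj
      exact hnadj hadj.symm
  -- certificates: for k in K with some x' in D, x' ≠ k
  have hcert : ∀ k ∈ K, (∃ x' ∈ D, x' ≠ k) → ∃ s ∈ S, ∃ z, z ∈ B ∧ z ≠ k ∧
      (∀ c ∈ B, c ≠ k → c ≠ z → G.Adj s c) ∧
      (∀ c ∈ B, ∀ c' ∈ B, c ≠ k → c ≠ z → c' ≠ k → c' ≠ z → c ≠ c' → G.Adj c c') := by
    intro k hkK hx'
    obtain ⟨x', hx'D, hx'k⟩ := hx'
    obtain ⟨Q, hQcl, hQcard, hkQ⟩ := hKv k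
    have hQS1 : (Q ∩ S).card ≤ 1 := by
      rw [Finset.card_le_one]
      intro x hx y hy
      rw [Finset.mem_inter] at hx hy
      exact cliq_inter Q hQcl x hx.1 hx.2 y hy.1 hy.2
    have hsplit := Finset.card_inter_add_card_sdiff Q S
    have hQB : Q \ S ⊆ B.erase k := by
      intro x hx
      rw [Finset.mem_sdiff] at hx
      rw [Finset.mem_erase, hBmem]
      exact ⟨fun h => hkQ (h ▸ hx.1), hx.2⟩
    have hEBk : (B.erase k).card = w := by
      rw [Finset.card_erase_of_mem (hKsub hkK), hBcard]
      omega
    have hQBle : (Q \ S).card ≤ w := by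
      rw [← hEBk]
      exact Finset.card_le_card hQB
    have hQSpos : (Q ∩ S).card = 1 := by
      rcases Nat.lt_or_ge (Q ∩ S).card 1 with h | h
      · exfalso
        have hQBcard : (Q \ S).card = w := by omega
        have heq : Q \ S = B.erase k := by
          apply Finset.eq_of_subset_of_card_le hQB
          omega
        have hd' : d ∈ B.erase k := Finset.mem_erase.mpr ⟨Ne.symm (hkd k hkK), hdB⟩
        have hx'' : x' ∈ B.erase k := Finset.mem_erase.mpr ⟨hx'k, hKsub (hDsub hx'D)⟩
        rw [← heq] at hd' hx''
        have hadj := hQcl (Finset.mem_coe.mpr (Finset.mem_sdiff.mp hd').1)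
          (Finset.mem_coe.mpr (Finset.mem_sdiff.mp hx'').1)
          (Ne.symm (hkd x' (hDsub hx'D)))
        exact ((hDmem x').mp hx'D).2 hadj
      · omega
    obtain ⟨s, hs⟩ := Finset.card_pos.mp (show 0 < (Q ∩ S).card by omega)
    rw [Finset.mem_inter] at hs
    have hQBcard : (Q \ S).card = w - 1 := by omega
    have hRcard : ((B.erase k) \ (Q \ S)).card = 1 := by
      rw [Finset.card_sdiff_of_subset hQB]
      omega
    obtain ⟨z, hz⟩ := Finset.card_eq_one.mp hRcard
    have hzmem : z ∈ B.erase k := by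
      have hzz : z ∈ (B.erase k) \ (Q \ S) := by
        rw [hz]
        exact Finset.mem_singleton_self z
      exact (Finset.mem_sdiff.mp hzz).1
    have hinQ : ∀ c ∈ B, c ≠ k → c ≠ z → c ∈ Q := by
      intro c hc hck hcz
      have h1 : c ∈ B.erase k := Finset.mem_erase.mpr ⟨hck, hc⟩
      have h2 : c ∉ (B.erase k) \ (Q \ S) := by
        rw [hz, Finset.mem_singleton]
        exact hcz
      have h3 : c ∈ Q \ S := by
        by_contra h
        exact h2 (Finset.mem_sdiff.mpr ⟨h1, h⟩)
      exact (Finset.mem_sdiff.mp h3).1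
    refine ⟨s, hs.2, z, (Finset.mem_erase.mp hzmem).2, (Finset.mem_erase.mp hzmem).1, ?_, ?_⟩
    · intro c hc hck hcz
      exact hQcl (Finset.mem_coe.mpr hs.1) (Finset.mem_coe.mpr (hinQ c hc hck hcz))
        (hSB s hs.2 c hc)
    · intro c hc c' hc' hck hcz hck' hcz' hcc
      exact hQcl (Finset.mem_coe.mpr (hinQ c hc hck hcz))
        (Finset.mem_coe.mpr (hinQ c' hc' hck' hcz')) hcc
  -- structure of maximum stable sets avoiding one vertex of S
  have hC1 : ∀ s ∈ S, (∃ y ∈ B, ∀ t ∈ S, G.Adj y t → t = s) ∨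
      (∃ s' : V, ∃ x ∈ D, ∀ t ∈ S, t ≠ s → t ≠ s' → ¬G.Adj d t ∧ ¬G.Adj x t) := by
    intro s hsS
    have hapos : 0 < a := by
      rw [← hScard]
      exact Finset.card_pos.mpr ⟨s, hsS⟩
    obtain ⟨S', hS'cl, hS'card, hsS'⟩ := hSv s
    have hS'st : ∀ x ∈ S', ∀ y ∈ S', x ≠ y → ¬G.Adj x y := by
      intro x hx y hy hne
      exact ((G.compl_adj x y).mp (hS'cl (Finset.mem_coe.mpr hx) (Finset.mem_coe.mpr hy) hne)).2
    have hWB : S' \ S ⊆ B := by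
      intro x hx
      rw [Finset.mem_sdiff] at hx
      exact (hBmem x).mpr hx.2
    have hsplit : (S' ∩ S).card + (S' \ S).card = a := by
      rw [Finset.card_inter_add_card_sdiff, hS'card]
    have hSsub : S' ∩ S ⊆ S.erase s := by
      intro x hx
      rw [Finset.mem_inter] at hx
      exact Finset.mem_erase.mpr ⟨fun h => hsS' (h ▸ hx.1), hx.2⟩
    have hesc : (S.erase s).card = a - 1 := by
      rw [Finset.card_erase_of_mem hsS, hScard]
    have hWd2 : ((S' \ S).erase d).card ≤ 1 := by
      rw [Finset.card_le_one]
      intro x hx y hy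
      by_contra hne
      have hx' := Finset.mem_of_mem_erase hx
      have hy' := Finset.mem_of_mem_erase hy
      have hnadj := hS'st x (Finset.mem_sdiff.mp hx').1 y (Finset.mem_sdiff.mp hy').1 hne
      rcases honly x y (hWB hx') (hWB hy') hne hnadj with h | h
      · exact (Finset.ne_of_mem_erase hx) h.1
      · exact (Finset.ne_of_mem_erase hy) h.1
    have hWcard : (S' \ S).card ≤ 2 := by
      have hsub2 : S' \ S ⊆ insert d ((S' \ S).erase d) := by
        intro x hx
        by_cases hxd : x = d
        · rw [hxd]; exact Finset.mem_insert_self d _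
        · exact Finset.mem_insert_of_mem (Finset.mem_erase.mpr ⟨hxd, hx⟩)
      have := Finset.card_le_card hsub2
      have := Finset.card_insert_le d ((S' \ S).erase d)
      omega
    have hc012 : (S' \ S).card = 0 ∨ (S' \ S).card = 1 ∨ (S' \ S).card = 2 := by omega
    rcases hc012 with hc | hc | hc
    · exfalso
      have h1 : (S' ∩ S).card ≤ a - 1 := by
        rw [← hesc]
        exact Finset.card_le_card hSsub
      omega
    · obtain ⟨y, hy⟩ := Finset.card_eq_one.mp hc
      have hyW : y ∈ S' \ S := by
        rw [hy]
        exact Finset.mem_singleton_self y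
      have heq : S' ∩ S = S.erase s := by
        apply Finset.eq_of_subset_of_card_le hSsub
        omega
      left
      refine ⟨y, hWB hyW, ?_⟩
      intro t htS hadj
      by_contra hts
      have ht' : t ∈ S.erase s := Finset.mem_erase.mpr ⟨hts, htS⟩
      rw [← heq] at ht'
      have htS' := (Finset.mem_inter.mp ht').1
      have hyS' := (Finset.mem_sdiff.mp hyW).1
      exact hS'st y hyS' t htS' (Ne.symm (hSB t htS y (hWB hyW))) hadj
    · obtain ⟨u, v, huv, huvW⟩ := Finset.card_eq_two.mp hc
      have huW : u ∈ S' \ S := by rw [huvW]; exact Finset.mem_insert_self u _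
      have hvW : v ∈ S' \ S := by
        rw [huvW]
        exact Finset.mem_insert_of_mem (Finset.mem_singleton_self v)
      have hnadj := hS'st u (Finset.mem_sdiff.mp huW).1 v (Finset.mem_sdiff.mp hvW).1 huv
      have hTcard : ((S.erase s) \ (S' ∩ S)).card = 1 := by
        rw [Finset.card_sdiff_of_subset hSsub]
        omega
      obtain ⟨s', hs'⟩ := Finset.card_eq_one.mp hTcard
      have hmemT : ∀ t : V, t ∈ S → t ≠ s → t ≠ s' → t ∈ S' := by
        intro t htS hts hts'
        have h1 : t ∈ S.erase s := Finset.mem_erase.mpr ⟨hts, htS⟩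
        have h2 : t ∉ (S.erase s) \ (S' ∩ S) := by
          rw [hs', Finset.mem_singleton]
          exact hts'
        have h3 : t ∈ S' ∩ S := by
          by_contra h
          exact h2 (Finset.mem_sdiff.mpr ⟨h1, h⟩)
        exact (Finset.mem_inter.mp h3).1
      right
      rcases honly u v (hWB huW) (hWB hvW) huv hnadj with h | h
      · refine ⟨s', v, h.2, ?_⟩
        intro t htS hts hts'
        have htS' := hmemT t htS hts hts'
        have huS' := (Finset.mem_sdiff.mp huW).1
        have hvS' := (Finset.mem_sdiff.mp hvW).1
        constructor
        · rw [← h.1]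
          exact hS'st u huS' t htS' (Ne.symm (hSB t htS u (hWB huW)))
        · exact hS'st v hvS' t htS' (Ne.symm (hSB t htS v (hWB hvW)))
      · refine ⟨s', u, h.2, ?_⟩
        intro t htS hts hts'
        have htS' := hmemT t htS hts hts'
        have huS' := (Finset.mem_sdiff.mp huW).1
        have hvS' := (Finset.mem_sdiff.mp hvW).1
        constructor
        · rw [← h.1]
          exact hS'st v hvS' t htS' (Ne.symm (hSB t htS v (hWB hvW)))
        · exact hS'st u huS' t htS' (Ne.symm (hSB t htS u (hWB huW)))
  -- the final counting argument
  have hcount : ∀ Y : Finset V, Y ⊆ B →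
      (∀ x ∈ D, ∀ p q : V, ∃ t ∈ S, t ≠ p ∧ t ≠ q ∧ (G.Adj d t ∨ G.Adj x t)) →
      (∀ y ∈ B, y ∉ Y → ∃ t1 ∈ S, ∃ t2 ∈ S, t1 ≠ t2 ∧ G.Adj y t1 ∧ G.Adj y t2) →
      a ≤ Y.card := by
    intro Y hYB hkill hexcl
    have hpick : ∀ s : V, ∃ y : V, s ∈ S → (y ∈ Y ∧ ∀ t ∈ S, G.Adj y t → t = s) := by
      intro s
      by_cases hsS : s ∈ S
      · rcases hC1 s hsS with ⟨y, hyB, hy⟩ | ⟨s', x, hxD, hcon⟩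
        · refine ⟨y, fun _ => ⟨?_, hy⟩⟩
          by_contra hyY
          obtain ⟨t1, ht1, t2, ht2, hne, ha1, ha2⟩ := hexcl y hyB hyY
          have e1 := hy t1 ht1 ha1
          have e2 := hy t2 ht2 ha2
          exact hne (e1.trans e2.symm)
        · exfalso
          obtain ⟨t, htS, htp, htq, hadj⟩ := hkill x hxD s s'
          obtain ⟨hnd, hnx⟩ := hcon t htS htp htq
          rcases hadj with h | h
          · exact hnd h
          · exact hnx h
      · exact ⟨v0, fun h => absurd h hsS⟩
    choose f hf using hpick
    have hcle : S.card ≤ Y.card := by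
      apply Finset.card_le_card_of_injOn f (fun s hs => (hf s hs).1)
      intro s1 h1 s2 h2 heq
      rw [Finset.mem_coe] at h1 h2
      obtain ⟨t, htS, hadj⟩ := L3 (f s1) (hYB (hf s1 h1).1)
      have e1 := (hf s1 h1).2 t htS hadj
      rw [heq] at hadj
      have e2 := (hf s2 h2).2 t htS hadj
      exact e1.symm.trans e2
    omega
  -- no vertex of S can be adjacent to all of a clique of size w inside B
  have bigC : ∀ s ∈ S, ∀ C : Finset V, C ⊆ B → (∀ c ∈ C, ∀ c' ∈ C, c ≠ c' → G.Adj c c') →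
      C.card = w → (∀ c ∈ C, G.Adj s c) → False := by
    intro s hsS C hCB hCcl hCcard hadj
    have hle : (insert s C).card ≤ w := by
      apply hclique
      intro x hx y hy hne
      rcases Finset.mem_insert.mp hx with h1 | h1 <;> rcases Finset.mem_insert.mp hy with h2 | h2
      · exact absurd (h1.trans h2.symm) hne
      · subst h1; exact hadj y h2
      · subst h2; exact (hadj x h1).symm
      · exact hCcl x h1 y h2 hne
    have hsC : s ∉ C := fun h => (hBmem s).mp (hCB h) hsS
    rw [Finset.card_insert_of_notMem hsC, hCcard] at hle
    omega
  have hDpos : 0 < D.card := Finset.card_pos.mpr ⟨x0, hx0D⟩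
  have hx0K : x0 ∈ K := hDsub hx0D
  have hd1 : (1:ℕ) ≤ Finset.card {d} := by simp
  rcases (show D.card = 1 ∨ D.card = 2 ∨ 3 ≤ D.card by omega) with hD1 | hD2 | hD3
  -- ============ ARM 1 : |D| = 1 ============
  · have hDeq : ∀ x ∈ D, x = x0 := fun x hx =>
      Finset.card_le_one.mp (le_of_eq hD1) x hx x0 hx0D
    have harm1 : ∀ k ∈ K.erase x0, ∃ s ∈ S,
        (∀ c ∈ K, c ≠ k → c ≠ x0 → G.Adj s c) ∧ (G.Adj s x0 ∨ G.Adj s d) ∧ ¬G.Adj s k := by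
      intro k hk
      have hkK := Finset.mem_of_mem_erase hk
      have hkx0 : k ≠ x0 := Finset.ne_of_mem_erase hk
      obtain ⟨s, hsS, z, hzB, hzk, hadj, hcc⟩ := hcert k hkK ⟨x0, hx0D, Ne.symm hkx0⟩
      have hzcases : z = d ∨ z = x0 := by
        by_contra hc
        push_neg at hc
        exact hx0nadj (hcc d hdB x0 (hKsub hx0K) (Ne.symm (hkd k hkK))
          (fun h => hc.1 h.symm) (Ne.symm hkx0) (fun h => hc.2 h.symm)
          (Ne.symm (hkd x0 hx0K)))
      refine ⟨s, hsS, ?_, ?_, ?_⟩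
      · intro c hcK hck hcx0
        refine hadj c (hKsub hcK) hck ?_
        rcases hzcases with hze | hze <;> rw [hze]
        · exact hkd c hcK
        · exact hcx0
      · rcases hzcases with hze | hze
        · exact Or.inl (hadj x0 (hKsub hx0K) (Ne.symm hkx0) (by rw [hze]; exact hkd x0 hx0K))
        · exact Or.inr (hadj d hdB (Ne.symm (hkd k hkK)) (by rw [hze]; exact Ne.symm (hkd x0 hx0K)))
      · intro hsk
        refine bigC s hsS (B.erase z) (Finset.erase_subset z B) ?_ ?_ ?_
        · intro c hc c' hc' hne
          by_contra hnadj
          have hcB := Finset.mem_of_mem_erase hc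
          have hc'B := Finset.mem_of_mem_erase hc'
          rcases honly c c' hcB hc'B hne hnadj with h | h
          · rcases hzcases with hze | hze
            · exact (Finset.ne_of_mem_erase hc) (h.1.trans hze.symm)
            · exact (Finset.ne_of_mem_erase hc') ((hDeq c' h.2).trans hze.symm)
          · rcases hzcases with hze | hze
            · exact (Finset.ne_of_mem_erase hc') (h.1.trans hze.symm)
            · exact (Finset.ne_of_mem_erase hc) ((hDeq c h.2).trans hze.symm)
        · have hzBmem : z ∈ B := hzB
          rw [Finset.card_erase_of_mem hzBmem, hBcard]
          omega
        · intro c hc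
          have hcz := Finset.ne_of_mem_erase hc
          have hcB := Finset.mem_of_mem_erase hc
          by_cases hck : c = k
          · rw [hck]; exact hsk
          · exact hadj c hcB hck hcz
    have hgch : ∀ k : V, ∃ s : V, k ∈ K.erase x0 → (s ∈ S ∧
        (∀ c ∈ K, c ≠ k → c ≠ x0 → G.Adj s c) ∧ (G.Adj s x0 ∨ G.Adj s d) ∧ ¬G.Adj s k) := by
      intro k
      by_cases hk : k ∈ K.erase x0
      · obtain ⟨s, hsS, hp⟩ := harm1 k hk
        exact ⟨s, fun _ => ⟨hsS, hp⟩⟩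
      · exact ⟨v0, fun h => absurd h hk⟩
    choose g hg using hgch
    have hinj : ∀ k1 ∈ K.erase x0, ∀ k2 ∈ K.erase x0, k1 ≠ k2 → g k1 ≠ g k2 := by
      intro k1 h1 k2 h2 hne heq
      have hadj12 : G.Adj (g k1) k2 := (hg k1 h1).2.1 k2 (Finset.mem_of_mem_erase h2)
        (Ne.symm hne) (Finset.ne_of_mem_erase h2)
      rw [heq] at hadj12
      exact (hg k2 h2).2.2.2 hadj12
    have hKx0card : (K.erase x0).card = w - 1 := by
      rw [Finset.card_erase_of_mem hx0K, hKcard]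
    have halow : w - 1 ≤ a := by
      rw [← hKx0card, ← hScard]
      apply Finset.card_le_card_of_injOn g (fun k hk => (hg k hk).1)
      intro k1 h1 k2 h2 heq
      rw [Finset.mem_coe] at h1 h2
      by_contra hne
      exact hinj k1 h1 k2 h2 hne heq
    have hkill : ∀ x ∈ D, ∀ p q : V, ∃ t ∈ S, t ≠ p ∧ t ≠ q ∧ (G.Adj d t ∨ G.Adj x t) := by
      intro x hxD p q
      have hxx0 := hDeq x hxD
      obtain ⟨k1, hk1, k2, hk2, k3, hk3, h12, h13, h23⟩ := three_mem (K.erase x0)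
        (by omega)
      have hg12 := hinj k1 hk1 k2 hk2 h12
      have hg13 := hinj k1 hk1 k3 hk3 h13
      have hg23 := hinj k2 hk2 k3 hk3 h23
      obtain ⟨t, hteq, htp, htq⟩ := pick3 (g k1) (g k2) (g k3) p q hg12 hg13 hg23
      have hkey : ∀ k ∈ K.erase x0, G.Adj d (g k) ∨ G.Adj x (g k) := by
        intro k hk
        rcases (hg k hk).2.2.1 with h | h
        · right; rw [hxx0]; exact h.symm
        · left; exact h.symm
      rcases hteq with rfl | rfl | rfl
      · exact ⟨g k1, (hg k1 hk1).1, htp, htq, hkey k1 hk1⟩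
      · exact ⟨g k2, (hg k2 hk2).1, htp, htq, hkey k2 hk2⟩
      · exact ⟨g k3, (hg k3 hk3).1, htp, htq, hkey k3 hk3⟩
    have hexcl : ∀ y ∈ B, y ∉ ({x0, d} : Finset V) →
        ∃ t1 ∈ S, ∃ t2 ∈ S, t1 ≠ t2 ∧ G.Adj y t1 ∧ G.Adj y t2 := by
      intro y hyB hyY
      simp only [Finset.mem_insert, Finset.mem_singleton] at hyY
      push_neg at hyY
      have hyK : y ∈ K := (hKmem y).mpr ⟨hyB, hyY.2⟩
      have hyKx0 : y ∈ K.erase x0 := Finset.mem_erase.mpr ⟨hyY.1, hyK⟩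
      have hcard2 : 2 ≤ ((K.erase x0).erase y).card := by
        have := Finset.card_erase_of_mem hyKx0
        omega
      obtain ⟨k1, hk1, k2, hk2, h12⟩ := two_mem _ hcard2
      have hk1' := Finset.mem_of_mem_erase hk1
      have hk2' := Finset.mem_of_mem_erase hk2
      refine ⟨g k1, (hg k1 hk1').1, g k2, (hg k2 hk2').1,
        hinj k1 hk1' k2 hk2' ?_, ?_, ?_⟩
      · intro h
        exact h12 h
      · exact ((hg k1 hk1').2.1 y (Finset.mem_of_mem_erase hyKx0)
          (Ne.symm (Finset.ne_of_mem_erase hk1)) hyY.1).symm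
      · exact ((hg k2 hk2').2.1 y (Finset.mem_of_mem_erase hyKx0)
          (Ne.symm (Finset.ne_of_mem_erase hk2)) hyY.1).symm
    have hsub : ({x0, d} : Finset V) ⊆ B := by
      intro t ht
      rcases Finset.mem_insert.mp ht with rfl | ht
      · exact hKsub hx0K
      · rw [Finset.mem_singleton] at ht
        rw [ht]
        exact hdB
    have hfin := hcount {x0, d} hsub hkill hexcl
    have hc2 : ({x0, d} : Finset V).card ≤ 2 := by
      refine le_trans (Finset.card_insert_le _ _) ?_
      simp
    omega
  -- ============ ARM 2 : |D| = 2 ============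
  · obtain ⟨x1, x2, hx12, hDeq2⟩ := Finset.card_eq_two.mp hD2
    have hx1D : x1 ∈ D := by rw [hDeq2]; exact Finset.mem_insert_self x1 _
    have hx2D : x2 ∈ D := by
      rw [hDeq2]
      exact Finset.mem_insert_of_mem (Finset.mem_singleton_self x2)
    have hDonly : ∀ x ∈ D, x = x1 ∨ x = x2 := by
      intro x hx
      rw [hDeq2] at hx
      rcases Finset.mem_insert.mp hx with h | h
      · exact Or.inl h
      · exact Or.inr (Finset.mem_singleton.mp h)
    have hx1K : x1 ∈ K := hDsub hx1D
    have hx2K : x2 ∈ K := hDsub hx2D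
    have hx1nadj : ¬G.Adj d x1 := ((hDmem x1).mp hx1D).2
    have hx2nadj : ¬G.Adj d x2 := ((hDmem x2).mp hx2D).2
    -- certificates for the vertices of K outside D
    have harm2a : ∀ k ∈ K \ D, ∃ s ∈ S, (∀ c ∈ K, c ≠ k → G.Adj s c) ∧ ¬G.Adj s k := by
      intro k hk
      have hkK := (Finset.mem_sdiff.mp hk).1
      have hkD := (Finset.mem_sdiff.mp hk).2
      have hkx1 : k ≠ x1 := fun h => hkD (h ▸ hx1D)
      have hkx2 : k ≠ x2 := fun h => hkD (h ▸ hx2D)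
      obtain ⟨s, hsS, z, hzB, hzk, hadj, hcc⟩ := hcert k hkK ⟨x1, hx1D, Ne.symm hkx1⟩
      have hzd : z = d := by
        by_contra hzd
        by_cases hzx1 : z = x1
        · exact hx2nadj (hcc d hdB x2 (hKsub hx2K) (Ne.symm (hkd k hkK))
            (fun h => hzd h.symm) (Ne.symm hkx2)
            (fun h => hx12 (hzx1.symm.trans h.symm))
            (Ne.symm (hkd x2 hx2K)))
        · exact hx1nadj (hcc d hdB x1 (hKsub hx1K) (Ne.symm (hkd k hkK))
            (fun h => hzd h.symm) (Ne.symm hkx1) (fun h => hzx1 h.symm)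
            (Ne.symm (hkd x1 hx1K)))
      refine ⟨s, hsS, ?_, ?_⟩
      · intro c hcK hck
        exact hadj c (hKsub hcK) hck (by rw [hzd]; exact hkd c hcK)
      · intro hsk
        refine bigC s hsS K hKsub hKcl hKcard ?_
        intro c hcK
        by_cases hck : c = k
        · rw [hck]; exact hsk
        · exact hadj c (hKsub hcK) hck (by rw [hzd]; exact hkd c hcK)
    -- certificate for x1
    have harm2b : ∀ j ∈ D, ∀ j' ∈ D, j ≠ j' →
        ∃ s ∈ S, (∀ c ∈ K, c ∉ D → G.Adj s c) ∧ (G.Adj s j' ∨ G.Adj s d) := by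
      intro j hjD j' hj'D hjj'
      have hjK := hDsub hjD
      have hj'K := hDsub hj'D
      have hjnadj : ¬G.Adj d j := ((hDmem j).mp hjD).2
      have hj'nadj : ¬G.Adj d j' := ((hDmem j').mp hj'D).2
      obtain ⟨s, hsS, z, hzB, hzj, hadj, hcc⟩ := hcert j hjK ⟨j', hj'D, Ne.symm hjj'⟩
      have hzcases : z = d ∨ z = j' := by
        by_contra hc
        push_neg at hc
        exact hj'nadj (hcc d hdB j' (hKsub hj'K) (Ne.symm (hkd j hjK))
          (fun h => hc.1 h.symm) (Ne.symm hjj') (fun h => hc.2 h.symm)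
          (Ne.symm (hkd j' hj'K)))
      refine ⟨s, hsS, ?_, ?_⟩
      · intro c hcK hcD
        have hcj : c ≠ j := fun h => hcD (h ▸ hjD)
        refine hadj c (hKsub hcK) hcj ?_
        rcases hzcases with hze | hze <;> rw [hze]
        · exact hkd c hcK
        · exact fun h => hcD (h ▸ hj'D)
      · rcases hzcases with hze | hze
        · exact Or.inl (hadj j' (hKsub hj'K) (Ne.symm hjj')
            (by rw [hze]; exact hkd j' hj'K))
        · exact Or.inr (hadj d hdB (Ne.symm (hkd j hjK))
            (by rw [hze]; exact Ne.symm (hkd j' hj'K)))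
    obtain ⟨s1, hs1S, hs1adj, hs1or⟩ := harm2b x1 hx1D x2 hx2D hx12
    obtain ⟨s2, hs2S, hs2adj, hs2or⟩ := harm2b x2 hx2D x1 hx1D (Ne.symm hx12)
    have hgch : ∀ k : V, ∃ s : V, k ∈ K \ D → (s ∈ S ∧
        (∀ c ∈ K, c ≠ k → G.Adj s c) ∧ ¬G.Adj s k) := by
      intro k
      by_cases hk : k ∈ K \ D
      · obtain ⟨s, hsS, hp⟩ := harm2a k hk
        exact ⟨s, fun _ => ⟨hsS, hp⟩⟩
      · exact ⟨v0, fun h => absurd h hk⟩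
    choose g hg using hgch
    have hinj : ∀ k1 ∈ K \ D, ∀ k2 ∈ K \ D, k1 ≠ k2 → g k1 ≠ g k2 := by
      intro k1 h1 k2 h2 hne heq
      have hadj12 : G.Adj (g k1) k2 := (hg k1 h1).2.1 k2 (Finset.mem_sdiff.mp h2).1
        (Ne.symm hne)
      rw [heq] at hadj12
      exact (hg k2 h2).2.2 hadj12
    have hs1g : ∀ k ∈ K \ D, s1 ≠ g k := by
      intro k hk heq
      have hadjk : G.Adj s1 k := hs1adj k (Finset.mem_sdiff.mp hk).1 (Finset.mem_sdiff.mp hk).2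
      rw [heq] at hadjk
      exact (hg k hk).2.2 hadjk
    have hs2g : ∀ k ∈ K \ D, s2 ≠ g k := by
      intro k hk heq
      have hadjk : G.Adj s2 k := hs2adj k (Finset.mem_sdiff.mp hk).1 (Finset.mem_sdiff.mp hk).2
      rw [heq] at hadjk
      exact (hg k hk).2.2 hadjk
    have hKDcard : (K \ D).card = w - 2 := by
      rw [Finset.card_sdiff_of_subset hDsub, hKcard, hD2]
    obtain ⟨k1, hk1, k2, hk2, h12⟩ := two_mem (K \ D) (by omega)
    have ha3 : 3 ≤ a := by
      rw [← hScard]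
      have hsub3 : ({g k1, g k2, s1} : Finset V) ⊆ S := by
        intro t ht
        rcases Finset.mem_insert.mp ht with h | h
        · rw [h]; exact (hg k1 hk1).1
        · rcases Finset.mem_insert.mp h with h | h
          · rw [h]; exact (hg k2 hk2).1
          · rw [Finset.mem_singleton.mp h]; exact hs1S
      have hc3 : ({g k1, g k2, s1} : Finset V).card = 3 := by
        rw [Finset.card_insert_of_notMem, Finset.card_insert_of_notMem, Finset.card_singleton]
        · simp only [Finset.mem_singleton]
          exact Ne.symm (hs1g k2 hk2)
        · simp only [Finset.mem_insert, Finset.mem_singleton]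
          push_neg
          exact ⟨hinj k1 hk1 k2 hk2 h12, Ne.symm (hs1g k1 hk1)⟩
      have := Finset.card_le_card hsub3
      omega
    have hkill : ∀ x ∈ D, ∀ p q : V, ∃ t ∈ S, t ≠ p ∧ t ≠ q ∧ (G.Adj d t ∨ G.Adj x t) := by
      intro x hxD p q
      rcases hDonly x hxD with hxe | hxe
      · -- x = x1 : use g k1, g k2, s2
        obtain ⟨t, hteq, htp, htq⟩ := pick3 (g k1) (g k2) s2 p q
          (hinj k1 hk1 k2 hk2 h12) (Ne.symm (hs2g k1 hk1)) (Ne.symm (hs2g k2 hk2))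
        have hgadj : ∀ k ∈ K \ D, G.Adj x (g k) :=
          fun k hk => by
            rw [hxe]
            exact ((hg k hk).2.1 x1 hx1K
              (fun h => (Finset.mem_sdiff.mp hk).2 (h ▸ hx1D))).symm
        rcases hteq with rfl | rfl | heq
        · exact ⟨g k1, (hg k1 hk1).1, htp, htq, Or.inr (hgadj k1 hk1)⟩
        · exact ⟨g k2, (hg k2 hk2).1, htp, htq, Or.inr (hgadj k2 hk2)⟩
        · refine ⟨s2, hs2S, heq ▸ htp, heq ▸ htq, ?_⟩
          rcases hs2or with h | h
          · right; rw [hxe]; exact h.symm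
          · left; exact h.symm
      · -- x = x2 : use g k1, g k2, s1
        obtain ⟨t, hteq, htp, htq⟩ := pick3 (g k1) (g k2) s1 p q
          (hinj k1 hk1 k2 hk2 h12) (Ne.symm (hs1g k1 hk1)) (Ne.symm (hs1g k2 hk2))
        have hgadj : ∀ k ∈ K \ D, G.Adj x (g k) :=
          fun k hk => by
            rw [hxe]
            exact ((hg k hk).2.1 x2 hx2K
              (fun h => (Finset.mem_sdiff.mp hk).2 (h ▸ hx2D))).symm
        rcases hteq with rfl | rfl | heq
        · exact ⟨g k1, (hg k1 hk1).1, htp, htq, Or.inr (hgadj k1 hk1)⟩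
        · exact ⟨g k2, (hg k2 hk2).1, htp, htq, Or.inr (hgadj k2 hk2)⟩
        · refine ⟨s1, hs1S, heq ▸ htp, heq ▸ htq, ?_⟩
          rcases hs1or with h | h
          · right; rw [hxe]; exact h.symm
          · left; exact h.symm
    have hexcl : ∀ y ∈ B, y ∉ ({d} : Finset V) →
        ∃ t1 ∈ S, ∃ t2 ∈ S, t1 ≠ t2 ∧ G.Adj y t1 ∧ G.Adj y t2 := by
      intro y hyB hyY
      rw [Finset.mem_singleton] at hyY
      have hyK : y ∈ K := (hKmem y).mpr ⟨hyB, hyY⟩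
      by_cases hyD : y ∈ D
      · refine ⟨g k1, (hg k1 hk1).1, g k2, (hg k2 hk2).1, hinj k1 hk1 k2 hk2 h12, ?_, ?_⟩
        · exact ((hg k1 hk1).2.1 y hyK (fun h => (Finset.mem_sdiff.mp hk1).2 (h ▸ hyD))).symm
        · exact ((hg k2 hk2).2.1 y hyK (fun h => (Finset.mem_sdiff.mp hk2).2 (h ▸ hyD))).symm
      · have hyKD : y ∈ K \ D := Finset.mem_sdiff.mpr ⟨hyK, hyD⟩
        have hcard1 : 0 < ((K \ D).erase y).card := by
          have := Finset.card_erase_of_mem hyKD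
          omega
        obtain ⟨k', hk'⟩ := Finset.card_pos.mp hcard1
        have hk'KD := Finset.mem_of_mem_erase hk'
        refine ⟨g k', (hg k' hk'KD).1, s1, hs1S, Ne.symm (hs1g k' hk'KD), ?_, ?_⟩
        · exact ((hg k' hk'KD).2.1 y hyK (Ne.symm (Finset.ne_of_mem_erase hk'))).symm
        · exact (hs1adj y hyK hyD).symm
    have hsub : ({d} : Finset V) ⊆ B := by
      intro t ht
      rw [Finset.mem_singleton.mp ht]
      exact hdB
    have hfin := hcount {d} hsub hkill hexcl
    simp only [Finset.card_singleton] at hfin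
    omega
  -- ============ ARM 3 : |D| ≥ 3 ============
  · have harm3 : ∀ k ∈ K, ∃ s ∈ S, (∀ c ∈ K, c ≠ k → G.Adj s c) ∧ ¬G.Adj s k := by
      intro k hkK
      have hDk : 0 < (D.erase k).card := by
        have := erase_card_ge D k
        omega
      obtain ⟨x', hx'⟩ := Finset.card_pos.mp hDk
      have hx'D := Finset.mem_of_mem_erase hx'
      have hx'k := Finset.ne_of_mem_erase hx'
      obtain ⟨s, hsS, z, hzB, hzk, hadj, hcc⟩ := hcert k hkK ⟨x', hx'D, hx'k⟩
      have hzd : z = d := by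
        by_contra hzd
        have hDk2 : 0 < ((D.erase k).erase z).card := by
          have h1 := erase_card_ge D k
          have h2 := erase_card_ge (D.erase k) z
          omega
        obtain ⟨x'', hx''⟩ := Finset.card_pos.mp hDk2
        have hx''D := Finset.mem_of_mem_erase (Finset.mem_of_mem_erase hx'')
        have hx''z := Finset.ne_of_mem_erase hx''
        have hx''k := Finset.ne_of_mem_erase (Finset.mem_of_mem_erase hx'')
        exact ((hDmem x'').mp hx''D).2 (hcc d hdB x'' (hKsub (hDsub hx''D))
          (Ne.symm (hkd k hkK)) (fun h => hzd h.symm) hx''k hx''z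
          (Ne.symm (hkd x'' (hDsub hx''D))))
      refine ⟨s, hsS, ?_, ?_⟩
      · intro c hcK hck
        exact hadj c (hKsub hcK) hck (by rw [hzd]; exact hkd c hcK)
      · intro hsk
        refine bigC s hsS K hKsub hKcl hKcard ?_
        intro c hcK
        by_cases hck : c = k
        · rw [hck]; exact hsk
        · exact hadj c (hKsub hcK) hck (by rw [hzd]; exact hkd c hcK)
    have hgch : ∀ k : V, ∃ s : V, k ∈ K → (s ∈ S ∧
        (∀ c ∈ K, c ≠ k → G.Adj s c) ∧ ¬G.Adj s k) := by
      intro k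
      by_cases hk : k ∈ K
      · obtain ⟨s, hsS, hp⟩ := harm3 k hk
        exact ⟨s, fun _ => ⟨hsS, hp⟩⟩
      · exact ⟨v0, fun h => absurd h hk⟩
    choose g hg using hgch
    have hinj : ∀ k1 ∈ K, ∀ k2 ∈ K, k1 ≠ k2 → g k1 ≠ g k2 := by
      intro k1 h1 k2 h2 hne heq
      have hadj12 : G.Adj (g k1) k2 := (hg k1 h1).2.1 k2 h2 (Ne.symm hne)
      rw [heq] at hadj12
      exact (hg k2 h2).2.2 hadj12
    have halow : w ≤ a := by
      rw [← hKcard, ← hScard]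
      apply Finset.card_le_card_of_injOn g (fun k hk => (hg k hk).1)
      intro p1 h1 p2 h2 heq
      rw [Finset.mem_coe] at h1 h2
      by_contra hne
      exact hinj p1 h1 p2 h2 hne heq
    have hkill : ∀ x ∈ D, ∀ p q : V, ∃ t ∈ S, t ≠ p ∧ t ≠ q ∧ (G.Adj d t ∨ G.Adj x t) := by
      intro x hxD p q
      have hxK := hDsub hxD
      have hcard3 : 3 ≤ (K.erase x).card := by
        have := Finset.card_erase_of_mem hxK
        omega
      obtain ⟨q1, hq1, q2, hq2, q3, hq3, h12, h13, h23⟩ := three_mem (K.erase x) hcard3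
      have hq1K := Finset.mem_of_mem_erase hq1
      have hq2K := Finset.mem_of_mem_erase hq2
      have hq3K := Finset.mem_of_mem_erase hq3
      obtain ⟨t, hteq, htp, htq⟩ := pick3 (g q1) (g q2) (g q3) p q
        (hinj q1 hq1K q2 hq2K h12) (hinj q1 hq1K q3 hq3K h13) (hinj q2 hq2K q3 hq3K h23)
      have hkey : ∀ k ∈ K.erase x, G.Adj x (g k) := by
        intro k hk
        exact ((hg k (Finset.mem_of_mem_erase hk)).2.1 x hxK
          (Ne.symm (Finset.ne_of_mem_erase hk))).symm
      rcases hteq with rfl | rfl | rfl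
      · exact ⟨g q1, (hg q1 hq1K).1, htp, htq, Or.inr (hkey q1 hq1)⟩
      · exact ⟨g q2, (hg q2 hq2K).1, htp, htq, Or.inr (hkey q2 hq2)⟩
      · exact ⟨g q3, (hg q3 hq3K).1, htp, htq, Or.inr (hkey q3 hq3)⟩
    have hexcl : ∀ y ∈ B, y ∉ ({d} : Finset V) →
        ∃ t1 ∈ S, ∃ t2 ∈ S, t1 ≠ t2 ∧ G.Adj y t1 ∧ G.Adj y t2 := by
      intro y hyB hyY
      rw [Finset.mem_singleton] at hyY
      have hyK : y ∈ K := (hKmem y).mpr ⟨hyB, hyY⟩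
      have hcard2 : 2 ≤ (K.erase y).card := by
        have := Finset.card_erase_of_mem hyK
        omega
      obtain ⟨q1, hq1, q2, hq2, h12⟩ := two_mem _ hcard2
      have hq1K := Finset.mem_of_mem_erase hq1
      have hq2K := Finset.mem_of_mem_erase hq2
      refine ⟨g q1, (hg q1 hq1K).1, g q2, (hg q2 hq2K).1, hinj q1 hq1K q2 hq2K h12, ?_, ?_⟩
      · exact ((hg q1 hq1K).2.1 y hyK (Ne.symm (Finset.ne_of_mem_erase hq1))).symm
      · exact ((hg q2 hq2K).2.1 y hyK (Ne.symm (Finset.ne_of_mem_erase hq2))).symm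
    have hsub : ({d} : Finset V) ⊆ B := by
      intro t ht
      rw [Finset.mem_singleton.mp ht]
      exact hdB
    have hfin := hcount {d} hsub hkill hexcl
    simp only [Finset.card_singleton] at hfin
    omega

lemma setup (G : SimpleGraph V) (hG : MinimalNonSumPerfect G) :
    Fintype.card V = alphaNum G + omegaNum G + 1 ∧
    (∀ v : V, ∃ K : Finset V, G.IsClique (K : Set V) ∧ K.card = omegaNum G ∧ v ∉ K) ∧
    (∀ v : V, ∃ S : Finset V, Gᶜ.IsClique (S : Set V) ∧ S.card = alphaNum G ∧ v ∉ S) := by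
  classical
  obtain ⟨hns, hmin⟩ := hG
  have hcard : ∀ s : Finset V, SumPerfect (G.induce (s : Set V)) →
      s.card ≤ alphaNum (G.induce (s : Set V)) + omegaNum (G.induce (s : Set V)) := by
    intro s h
    have h1 := sp_card_le h
    simpa using h1
  have hbig : Fintype.card V > alphaNum G + omegaNum G := by
    by_contra hle
    push_neg at hle
    apply hns
    intro s
    by_cases hs : s = Finset.univ
    · subst hs
      rw [omega_iso (induceCoeUnivIso G), alpha_iso (induceCoeUnivIso G), Finset.card_univ]
      exact hle
    · exact hcard s (hmin s hs)
  have key : ∀ v : V, ∃ K S : Finset V, G.IsClique (K : Set V) ∧ Gᶜ.IsClique (S : Set V)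
      ∧ v ∉ K ∧ v ∉ S ∧ Fintype.card V - 1 ≤ S.card + K.card
      ∧ K.card ≤ omegaNum G ∧ S.card ≤ alphaNum G := by
    intro v
    have hne : Finset.univ.erase v ≠ Finset.univ := by
      intro h
      have hv := Finset.mem_univ v
      rw [← h] at hv
      exact (Finset.notMem_erase v _) hv
    have hsp := hcard _ (hmin (Finset.univ.erase v) hne)
    obtain ⟨K, hKs, hKcl, hKcard⟩ := clique_transfer (G := G) (Finset.univ.erase v)
    obtain ⟨S, hSs, hScl, hScard⟩ := stable_transfer (G := G) (Finset.univ.erase v)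
    have h1 : K.card ≤ omegaNum G := clique_card_le G hKcl
    have h2 : S.card ≤ alphaNum G := clique_card_le Gᶜ hScl
    have hec : (Finset.univ.erase v).card = Fintype.card V - 1 := by
      rw [Finset.card_erase_of_mem (Finset.mem_univ v), Finset.card_univ]
    refine ⟨K, S, hKcl, hScl, fun h => (Finset.notMem_erase v _) (hKs h),
      fun h => (Finset.notMem_erase v _) (hSs h), ?_, h1, h2⟩
    omega
  have hpos : 0 < Fintype.card V := by omega
  obtain ⟨v0⟩ := Fintype.card_pos_iff.mp hpos
  obtain ⟨K0, S0, _, _, _, _, hb0, hk0, hs0⟩ := key v0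
  have hn : Fintype.card V = alphaNum G + omegaNum G + 1 := by omega
  refine ⟨hn, fun v => ?_, fun v => ?_⟩
  · obtain ⟨K, S, hK, hS, hvK, hvS, hb, hk, hs⟩ := key v
    exact ⟨K, hK, by omega, hvK⟩
  · obtain ⟨K, S, hK, hS, hvK, hvS, hb, hk, hs⟩ := key v
    exact ⟨S, hS, by omega, hvS⟩


end SPAux
end SPAuxSection

/-- A minimal non-sum-perfect graph has `max {α, ω} ≤ 3` and hence at most 7 vertices. -/
theorem stmt17 {V : Type*} [Fintype V] (G : SimpleGraph V)
    (hG : MinimalNonSumPerfect G) :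
    max (alphaNum G) (omegaNum G) ≤ 3 ∧ Fintype.card V ≤ 7 := by

  classical
  obtain ⟨hn, hKv, hSv⟩ := SPAux.setup G hG
  have hcl : ∀ t : Finset V, G.IsClique (t : Set V) → t.card ≤ omegaNum G :=
    fun t ht => SPAux.clique_card_le G ht
  have hst : ∀ t : Finset V, Gᶜ.IsClique (t : Set V) → t.card ≤ alphaNum G :=
    fun t ht => SPAux.clique_card_le Gᶜ ht
  have hw3 : omegaNum G ≤ 3 := by
    by_contra hgt
    push_neg at hgt
    exact SPAux.core G (alphaNum G) (omegaNum G) hcl hst hn hKv hSv hgt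
  have ha3 : alphaNum G ≤ 3 := by
    by_contra hgt
    push_neg at hgt
    refine SPAux.core Gᶜ (omegaNum G) (alphaNum G) hst ?_ (by omega) hSv ?_ hgt
    · intro t ht
      rw [compl_compl] at ht
      exact hcl t ht
    · intro v
      obtain ⟨K, h1, h2, h3⟩ := hKv v
      refine ⟨K, ?_, h2, h3⟩
      rwa [compl_compl]
  exact ⟨max_le ha3 hw3, by omega⟩
end
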